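/- arXiv:2108.00880 — 7 statements merged into one kernel-verified Lean document; each statement's English description precedes it below -/
import Mathlib

section
/- Suppose S is a nondegenerate n-dimensional simplex with S ⊆ Q_n ⊆ nS, with basic Lagrange polynomials λ_j and coefficients (l_{ij}). Then: (i) max_{x ∈ ver(Q_n)} λ_j(x) = 1 for every j = 1,…,n+1; (ii) max_{x ∈ ver(Q_n)} (−λ_j(x)) = (n−1)/(n+1) for every j = 1,…,n+1; (iii) the centroid of S equals (1/2,…,1/2), the center of Q_n; (iv) Σ_{j=1}^{n+1} |l_{ij}| = 2 for every i = 1,…,n; (v) Σ_{i=1}^{n} |l_{ij}| = 2n/(n+1) for every j = 1,…,n+1; (vi) (1/n)Q_n ⊆ S and nS ⊆ n²Q_n, where σQ_n denotes the homothet of Q_n about its center with ratio σ. -/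
open Set MeasureTheory Finset Metric

noncomputable section

/-- The unit cube `Q_n = [0,1]^n` in `ℝ^n`. -/
def unitCube (n : ℕ) : Set (EuclideanSpace ℝ (Fin n)) :=
  {x | ∀ i, x i ∈ Set.Icc (0 : ℝ) 1}

/-- The set of vertices of the unit cube `Q_n`. -/
def cubeVertices (n : ℕ) : Set (EuclideanSpace ℝ (Fin n)) :=
  {x | ∀ i, x i = 0 ∨ x i = 1}

/-- The closed unit Euclidean ball `B_n` in `ℝ^n`. -/
def unitBall (n : ℕ) : Set (EuclideanSpace ℝ (Fin n)) :=
  Metric.closedBall 0 1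

/-- Image of a set under the homothety with center `c` and ratio `σ`. -/
def homothet {n : ℕ} (c : EuclideanSpace ℝ (Fin n)) (σ : ℝ)
    (S : Set (EuclideanSpace ℝ (Fin n))) : Set (EuclideanSpace ℝ (Fin n)) :=
  (fun x => c + σ • (x - c)) '' S

/-- The simplex with vertex set `v` (its convex hull). -/
def simplexSet {n : ℕ} (v : Fin (n + 1) → EuclideanSpace ℝ (Fin n)) :
    Set (EuclideanSpace ℝ (Fin n)) :=
  convexHull ℝ (Set.range v)

/-- The centroid (center of gravity) of the simplex with vertices `v`. -/
def simplexCentroid {n : ℕ} (v : Fin (n + 1) → EuclideanSpace ℝ (Fin n)) :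
    EuclideanSpace ℝ (Fin n) :=
  Finset.univ.centroid ℝ v

/-- `σS`: homothetic copy of the simplex `S` with center at its centroid and ratio `σ`. -/
def simplexHomothet {n : ℕ} (v : Fin (n + 1) → EuclideanSpace ℝ (Fin n)) (σ : ℝ) :
    Set (EuclideanSpace ℝ (Fin n)) :=
  homothet (simplexCentroid v) σ (simplexSet v)

/-- The absorption index `ξ(Ω;S)`: minimal `σ ≥ 1` with `Ω ⊆ σS`. -/
def xiInd {n : ℕ} (Ω : Set (EuclideanSpace ℝ (Fin n)))
    (v : Fin (n + 1) → EuclideanSpace ℝ (Fin n)) : ℝ :=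
  sInf {σ : ℝ | 1 ≤ σ ∧ Ω ⊆ simplexHomothet v σ}

/-- `α(Ω;S)`: minimal `σ > 0` such that `Ω` is contained in a translate of `σS`. -/
def alphaInd {n : ℕ} (Ω : Set (EuclideanSpace ℝ (Fin n)))
    (v : Fin (n + 1) → EuclideanSpace ℝ (Fin n)) : ℝ :=
  sInf {σ : ℝ | 0 < σ ∧ ∃ t : EuclideanSpace ℝ (Fin n),
    Ω ⊆ (fun x => t + x) '' simplexHomothet v σ}

/-- `lam` is the family of basic Lagrange polynomials of the simplex with vertices `v`:
affine maps with `lam j (v k) = δ_{jk}`. -/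
def IsLagrangeBasis {n : ℕ} (v : Fin (n + 1) → EuclideanSpace ℝ (Fin n))
    (lam : Fin (n + 1) → (EuclideanSpace ℝ (Fin n) →ᵃ[ℝ] ℝ)) : Prop :=
  ∀ j k, lam j (v k) = if j = k then (1 : ℝ) else 0

/-- The `i`-th axial diameter of a set: maximal length of a segment contained in it
and parallel to the `i`-th coordinate axis. -/
def axialDiameter {n : ℕ} (i : Fin n) (S : Set (EuclideanSpace ℝ (Fin n))) : ℝ :=
  sSup {t : ℝ | 0 ≤ t ∧ ∃ x, x ∈ S ∧ x + t • (EuclideanSpace.single i (1 : ℝ)) ∈ S}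

/-- Norm of the interpolation projector with Lagrange basis `lam`, as an operator
`C(Ω) → C(Ω)`: it equals `max_{x ∈ Ω} Σ_j |λ_j(x)|`. -/
def projNorm {n : ℕ} (Ω : Set (EuclideanSpace ℝ (Fin n)))
    (lam : Fin (n + 1) → (EuclideanSpace ℝ (Fin n) →ᵃ[ℝ] ℝ)) : ℝ :=
  sSup ((fun x => ∑ j, |lam j x|) '' Ω)

/-- `θ_n(Ω)`: the minimal norm of an interpolation projector with nodes in `Ω`. -/
def thetaMin (n : ℕ) (Ω : Set (EuclideanSpace ℝ (Fin n))) : ℝ :=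
  sInf {t : ℝ | ∃ v : Fin (n + 1) → EuclideanSpace ℝ (Fin n),
    ∃ lam : Fin (n + 1) → (EuclideanSpace ℝ (Fin n) →ᵃ[ℝ] ℝ),
      AffineIndependent ℝ v ∧ (∀ j, v j ∈ Ω) ∧ IsLagrangeBasis v lam ∧
      t = projNorm Ω lam}

/-- `ξ_n`: minimal absorption index of the unit cube by a contained nondegenerate simplex. -/
def xiMin (n : ℕ) : ℝ :=
  sInf {t : ℝ | ∃ v : Fin (n + 1) → EuclideanSpace ℝ (Fin n),
    AffineIndependent ℝ v ∧ simplexSet v ⊆ unitCube n ∧ t = xiInd (unitCube n) v}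

/-- The standardized Legendre polynomial `χ_n` (Rodrigues formula). -/
def legendreChi (n : ℕ) (t : ℝ) : ℝ :=
  (1 / (2 ^ n * (n.factorial : ℝ))) * iteratedDeriv n (fun s : ℝ => (s ^ 2 - 1) ^ n) t

/-- The inverse of `χ_n` on the half-axis `[1, +∞)`. -/
def legendreInv (n : ℕ) (y : ℝ) : ℝ :=
  Function.invFunOn (legendreChi n) (Set.Ici 1) y

/-- `ν_n`: the maximal volume of an `n`-dimensional simplex contained in `Q_n`. -/
def maxSimplexVol (n : ℕ) : ℝ :=
  sSup {t : ℝ | ∃ v : Fin (n + 1) → EuclideanSpace ℝ (Fin n),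
    AffineIndependent ℝ v ∧ simplexSet v ⊆ unitCube n ∧
    t = (volume (simplexSet v)).toReal}

/-- `h_n`: the maximal determinant of an `n×n` matrix with entries in `{0,1}`. -/
def maxDet01 (n : ℕ) : ℝ :=
  sSup {d : ℝ | ∃ M : Matrix (Fin n) (Fin n) ℝ,
    (∀ i j, M i j = 0 ∨ M i j = 1) ∧ d = M.det}

/-- `σ_n`: the volume of a regular `n`-dimensional simplex inscribed into `B_n`. -/
def regSimplexVol (n : ℕ) : ℝ :=
  sSup {t : ℝ | ∃ v : Fin (n + 1) → EuclideanSpace ℝ (Fin n),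
    AffineIndependent ℝ v ∧ (∃ e : ℝ, ∀ j k, j ≠ k → dist (v j) (v k) = e) ∧
    (∀ j, ‖v j‖ = 1) ∧ t = (volume (simplexSet v)).toReal}

end
section AuxLem

lemma aux_mul_le_max (a x : ℝ) (h0 : 0 ≤ x) (h1 : x ≤ 1) : a * x ≤ max a 0 := by
  rcases le_total a 0 with h | h
  · calc a * x ≤ 0 := mul_nonpos_of_nonpos_of_nonneg h h0
    _ ≤ max a 0 := le_max_right _ _
  · calc a * x ≤ a * 1 := mul_le_mul_of_nonneg_left h1 h
    _ = a := mul_one a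
    _ ≤ max a 0 := le_max_left _ _

lemma aux_abs_eq_max (a : ℝ) : |a| = max a 0 + max (-a) 0 := by
  rcases le_total a 0 with h | h
  · rw [abs_of_nonpos h, max_eq_right h, max_eq_left (by linarith), zero_add]
  · rw [abs_of_nonneg h, max_eq_left h, max_eq_right (by linarith), add_zero]

lemma aux_max_sub (a : ℝ) : max a 0 = max (-a) 0 + a := by
  rcases le_total a 0 with h | h
  · rw [max_eq_right h, max_eq_left (by linarith)]; ring
  · rw [max_eq_left h, max_eq_right (by linarith)]; ring

end AuxLem

set_option maxHeartbeats 1000000 in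
/-- Theorem 6.1: If `S ⊆ Q_n ⊆ nS`, then (i) `max_{ver Q_n} λ_j = 1`,
(ii) `max_{ver Q_n}(−λ_j) = (n−1)/(n+1)`, (iii) the centroid of `S` is `(1/2,…,1/2)`,
(iv) `Σ_j |l_{ij}| = 2`, (v) `Σ_i |l_{ij}| = 2n/(n+1)`,
(vi) `(1/n)Q_n ⊆ S` and `nS ⊆ n²Q_n`. -/
theorem quasi_rigid_simplex_properties (n : ℕ) (hn : 0 < n)
    (v : Fin (n + 1) → EuclideanSpace ℝ (Fin n)) (hv : AffineIndependent ℝ v)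
    (hS : simplexSet v ⊆ unitCube n) (hQ : unitCube n ⊆ simplexHomothet v n)
    (l : Fin n → Fin (n + 1) → ℝ) (b : Fin (n + 1) → ℝ)
    (lam : Fin (n + 1) → (EuclideanSpace ℝ (Fin n) →ᵃ[ℝ] ℝ))
    (hlam : IsLagrangeBasis v lam)
    (hcoef : ∀ j x, lam j x = (∑ i : Fin n, l i j * x i) + b j) :
    (∀ j, sSup ((fun x => lam j x) '' cubeVertices n) = 1) ∧
    (∀ j, sSup ((fun x => -(lam j x)) '' cubeVertices n) = ((n : ℝ) - 1) / ((n : ℝ) + 1)) ∧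
    (∀ i, simplexCentroid v i = 1 / 2) ∧
    (∀ i, ∑ j : Fin (n + 1), |l i j| = 2) ∧
    (∀ j, ∑ i : Fin n, |l i j| = 2 * (n : ℝ) / ((n : ℝ) + 1)) ∧
    homothet ((2 : ℝ)⁻¹ • ∑ i : Fin n, EuclideanSpace.single i (1 : ℝ))
        (1 / (n : ℝ)) (unitCube n) ⊆ simplexSet v ∧
    simplexHomothet v n ⊆
      homothet ((2 : ℝ)⁻¹ • ∑ i : Fin n, EuclideanSpace.single i (1 : ℝ))
        ((n : ℝ) ^ 2) (unitCube n) := by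
    classical
  have hNpos : (0:ℝ) < (n:ℝ) := by exact_mod_cast hn
  have hlam' : ∀ j k, lam j (v k) = if j = k then (1 : ℝ) else 0 := hlam
  have hN1 : (0:ℝ) < (n:ℝ) + 1 := by linarith
  have hne : (n:ℝ) + 1 ≠ 0 := ne_of_gt hN1
  -- affine basis
  have hcard : Fintype.card (Fin (n+1)) = Module.finrank ℝ (EuclideanSpace ℝ (Fin n)) + 1 := by
    simp [finrank_euclideanSpace]
  have htop : affineSpan ℝ (Set.range v) = ⊤ :=
    hv.affineSpan_eq_top_iff_card_eq_finrank_add_one.mpr hcard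
  let B : AffineBasis (Fin (n+1)) ℝ (EuclideanSpace ℝ (Fin n)) := ⟨v, hv, htop⟩
  have hBv : (B : Fin (n+1) → EuclideanSpace ℝ (Fin n)) = v := rfl
  have hlamB : ∀ j x, lam j x = B.coord j x := by
    intro j x
    have hw : ∑ k, B.coord k x = 1 := B.sum_coord_apply_eq_one x
    have hx := B.affineCombination_coord_eq_self x
    rw [hBv] at hx
    conv_lhs => rw [← hx]
    rw [Finset.map_affineCombination _ v _ hw,
      Finset.univ.affineCombination_eq_linear_combination _ _ hw]
    simp [Function.comp, hlam', mul_ite]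
  have hsum1 : ∀ x : EuclideanSpace ℝ (Fin n), ∑ j, lam j x = 1 := by
    intro x
    rw [Finset.sum_congr rfl fun j _ => hlamB j x]
    exact B.sum_coord_apply_eq_one x
  -- sum of coefficients
  have hbsum : ∑ j, b j = 1 := by
    have h := hsum1 0
    simp only [hcoef] at h
    simpa using h
  have hlsum : ∀ i, ∑ j, l i j = 0 := by
    intro i
    have h := hsum1 (EuclideanSpace.single i (1:ℝ))
    simp only [hcoef, EuclideanSpace.single_apply, mul_ite, mul_one, mul_zero,
      Finset.sum_ite_eq', Finset.mem_univ, if_true, Finset.sum_add_distrib, hbsum] at h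
    linarith
  -- membership in simplex
  have hmemS : ∀ x, x ∈ simplexSet v ↔ ∀ j, 0 ≤ lam j x := by
    intro x
    have h := B.convexHull_eq_nonneg_coord
    rw [hBv] at h
    rw [simplexSet, h]
    simp only [Set.mem_setOf_eq]
    exact forall_congr' fun j => by rw [hlamB]
  -- centroid coordinates
  have hccoord : ∀ j, lam j (simplexCentroid v) = 1/((n:ℝ)+1) := by
    intro j
    have hwc : ∑ k, (Finset.univ.centroidWeights ℝ : Fin (n+1) → ℝ) k = 1 :=
      Finset.univ.sum_centroidWeights_eq_one_of_card_ne_zero ℝ (by simp)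
    rw [simplexCentroid, Finset.centroid_def,
      Finset.map_affineCombination _ v _ hwc,
      Finset.univ.affineCombination_eq_linear_combination _ _ hwc]
    simp [Function.comp, hlam', mul_ite, Finset.centroidWeights_apply]
  -- homothety formula
  have hhom : ∀ (σ : ℝ) (x : EuclideanSpace ℝ (Fin n)) j,
      lam j (simplexCentroid v + σ • (x - simplexCentroid v))
        = σ * lam j x + (1 - σ)/((n:ℝ)+1) := by
    intro σ x j
    have h1 : simplexCentroid v + σ • (x - simplexCentroid v)
        = σ • (x - simplexCentroid v) +ᵥ simplexCentroid v := by
      rw [vadd_eq_add, add_comm]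
    rw [h1, AffineMap.map_vadd, LinearMap.map_smul]
    have h2 : (lam j).linear (x - simplexCentroid v) = lam j x - lam j (simplexCentroid v) :=
      (lam j).linearMap_vsub x (simplexCentroid v)
    rw [h2, hccoord j]
    simp only [vadd_eq_add, smul_eq_mul]
    field_simp
    ring
  -- lower bound on cube
  have hK1 : ∀ x ∈ unitCube n, ∀ j, (1 - (n:ℝ))/((n:ℝ)+1) ≤ lam j x := by
    intro x hx j
    obtain ⟨w, hw, hwx⟩ := hQ hx
    rw [← hwx, hhom]
    have h0 : 0 ≤ lam j w := (hmemS w).1 hw j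
    nlinarith
  -- notation for max sums
  set M : Fin (n+1) → ℝ := fun j => (∑ i, max (l i j) 0) + b j with hM
  set m : Fin (n+1) → ℝ := fun j => (∑ i, max (-(l i j)) 0) - b j with hm
  set s : Fin n → ℝ := fun i => ∑ j, max (-(l i j)) 0 with hs
  have hcubeV : cubeVertices n ⊆ unitCube n := by
    intro x hx i
    rcases hx i with h | h <;> rw [h] <;> constructor <;> norm_num
  -- upper bounds on the cube
  have hub : ∀ j, ∀ x ∈ unitCube n, lam j x ≤ M j := by
    intro j x hx
    rw [hcoef]
    have : ∑ i, l i j * x i ≤ ∑ i, max (l i j) 0 :=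
      Finset.sum_le_sum fun i _ => aux_mul_le_max _ _ (hx i).1 (hx i).2
    simp only [hM]; linarith
  have hlb : ∀ j, ∀ x ∈ unitCube n, -(lam j x) ≤ m j := by
    intro j x hx
    rw [hcoef]
    have : ∑ i, (-(l i j)) * x i ≤ ∑ i, max (-(l i j)) 0 :=
      Finset.sum_le_sum fun i _ => aux_mul_le_max _ _ (hx i).1 (hx i).2
    simp only [hm]
    have h2 : ∑ i, (-(l i j)) * x i = -∑ i, l i j * x i := by
      rw [← Finset.sum_neg_distrib]; exact Finset.sum_congr rfl fun i _ => by ring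
    linarith [h2 ▸ this]
  -- attaining vertices
  have hxp : ∀ j, ∃ x ∈ cubeVertices n, lam j x = M j := by
    intro j
    refine ⟨WithLp.toLp 2 (fun i => if 0 < l i j then (1:ℝ) else 0), ?_, ?_⟩
    · intro i; dsimp only; split_ifs <;> simp
    · rw [hcoef]
      simp only [hM]
      congr 1
      refine Finset.sum_congr rfl fun i _ => ?_
      rcases lt_or_ge 0 (l i j) with h | h
      · rw [if_pos h, mul_one, max_eq_left h.le]
      · rw [if_neg (not_lt.mpr h), mul_zero, max_eq_right h]
  have hxm : ∀ j, ∃ x ∈ cubeVertices n, lam j x = -(m j) := by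
    intro j
    refine ⟨WithLp.toLp 2 (fun i => if l i j < 0 then (1:ℝ) else 0), ?_, ?_⟩
    · intro i; dsimp only; split_ifs <;> simp
    · rw [hcoef]
      simp only [hm, neg_sub]
      have : ∑ i, l i j * (if l i j < 0 then (1:ℝ) else 0) = -∑ i, max (-(l i j)) 0 := by
        rw [← Finset.sum_neg_distrib]
        refine Finset.sum_congr rfl fun i _ => ?_
        rcases lt_or_ge (l i j) 0 with h | h
        · rw [if_pos h, mul_one, max_eq_left (by linarith)]; ring
        · rw [if_neg (not_lt.mpr h), mul_zero, max_eq_right (by linarith)]; ring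
      rw [this]; ring
  -- m j ≤ (n-1)/(n+1)
  have hmle : ∀ j, m j ≤ ((n:ℝ) - 1)/((n:ℝ)+1) := by
    intro j
    obtain ⟨x, hxV, hxval⟩ := hxm j
    have := hK1 x (hcubeV hxV) j
    rw [hxval] at this
    have heq : -((1 - (n:ℝ))/((n:ℝ)+1)) = ((n:ℝ) - 1)/((n:ℝ)+1) := by ring
    linarith [heq]
  -- positivity of s i
  have hspos : ∀ i, 0 < s i := by
    intro i
    rcases lt_or_ge 0 (s i) with h | h
    · exact h
    exfalso
    have hnn : ∀ j ∈ Finset.univ, 0 ≤ max (-(l i j)) 0 := fun j _ => le_max_right _ _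
    have hz : ∀ j ∈ Finset.univ, max (-(l i j)) 0 = 0 := by
      rw [← Finset.sum_eq_zero_iff_of_nonneg hnn]
      have : (0:ℝ) ≤ s i := Finset.sum_nonneg hnn
      linarith
    have hlnn : ∀ j ∈ Finset.univ, (0:ℝ) ≤ l i j := by
      intro j hj
      have := hz j hj
      by_contra hc
      push_neg at hc
      rw [max_eq_left (by linarith)] at this
      linarith
    have hl0 : ∀ j, l i j = 0 := by
      intro j
      have := (Finset.sum_eq_zero_iff_of_nonneg hlnn).1 (hlsum i) j (Finset.mem_univ j)
      exact this
    have heqpt : EuclideanSpace.single i (1:ℝ) = (0 : EuclideanSpace ℝ (Fin n)) := by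
      apply B.ext_elem
      intro k
      rw [← hlamB, ← hlamB, hcoef, hcoef]
      simp [EuclideanSpace.single_apply, mul_ite, hl0]
    have := congrFun (congrArg (fun (z : EuclideanSpace ℝ (Fin n)) (i' : Fin n) => z i') heqpt) i
    simp [EuclideanSpace.single_apply] at this
  -- s i ≥ 1
  have hsge1 : ∀ i, 1 ≤ s i := by
    intro i
    have hsne : s i ≠ 0 := ne_of_gt (hspos i)
    set μ : Fin (n+1) → ℝ := fun j => max (-(l i j)) 0 / s i with hμ
    have hμnn : ∀ j, 0 ≤ μ j := fun j => div_nonneg (le_max_right _ _) (hspos i).le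
    have hμ1 : ∑ j, μ j = 1 := by
      simp only [hμ, ← Finset.sum_div]
      rw [div_eq_one_iff_eq hsne]
    set y := Finset.univ.affineCombination ℝ v μ with hy
    have hlamy : ∀ j, lam j y = μ j := by
      intro j
      rw [hy, Finset.map_affineCombination _ v _ hμ1,
        Finset.univ.affineCombination_eq_linear_combination _ _ hμ1]
      simp [Function.comp, hlam', mul_ite]
    have hyS : y ∈ simplexSet v := (hmemS y).2 fun j => (hlamy j) ▸ hμnn j
    have happ : ∀ (x : EuclideanSpace ℝ (Fin n)) (t : ℝ) j,
        lam j (x + t • EuclideanSpace.single i (1:ℝ)) = lam j x + t * l i j := by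
      intro x t j
      rw [hcoef, hcoef]
      simp only [PiLp.add_apply, PiLp.smul_apply, EuclideanSpace.single_apply, smul_eq_mul,
        mul_add, Finset.sum_add_distrib]
      have : ∑ k, l k j * (t * if k = i then (1:ℝ) else 0) = t * l i j := by
        simp [mul_ite, Finset.sum_ite_eq', mul_comm]
      rw [this]; ring
    set y' := y + (s i)⁻¹ • EuclideanSpace.single i (1:ℝ) with hy'
    have hy'S : y' ∈ simplexSet v := by
      apply (hmemS y').2
      intro j
      rw [hy', happ, hlamy]
      rcases le_or_gt 0 (l i j) with h | h
      · have : 0 ≤ (s i)⁻¹ * l i j := mul_nonneg (inv_nonneg.mpr (hspos i).le) h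
        linarith [hμnn j]
      · have hμj : μ j = (-(l i j)) / s i := by
          rw [hμ]; dsimp only; rw [max_eq_left (by linarith)]
        rw [hμj]
        have : (-(l i j)) / s i + (s i)⁻¹ * l i j = 0 := by
          field_simp
          ring
        linarith
    have hyQ := hS hyS
    have hy'Q := hS hy'S
    have h1 : y' i = y i + (s i)⁻¹ := by
      rw [hy']
      simp [PiLp.add_apply, PiLp.smul_apply, EuclideanSpace.single_apply]
    have h2 : (s i)⁻¹ ≤ 1 := by
      have := (hyQ i).1
      have := (hy'Q i).2
      rw [h1] at this
      linarith
    have h3 := mul_le_mul_of_nonneg_left h2 (hspos i).le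
    rw [mul_inv_cancel₀ hsne, mul_one] at h3
    exact h3
  -- sum identities
  have hms : ∑ j, m j = (∑ i, s i) - 1 := by
    simp only [hm, Finset.sum_sub_distrib, hbsum, hs]
    rw [Finset.sum_comm]
  have hslen : (n:ℝ) ≤ ∑ i, s i := by
    calc (n:ℝ) = ∑ _i : Fin n, (1:ℝ) := by simp
    _ ≤ ∑ i, s i := Finset.sum_le_sum fun i _ => hsge1 i
  have hconst : ∑ _j : Fin (n+1), ((n:ℝ) - 1)/((n:ℝ)+1) = (n:ℝ) - 1 := by
    rw [Finset.sum_const, Finset.card_univ, Fintype.card_fin, nsmul_eq_mul]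
    push_cast
    field_simp
  have hmsum_le : ∑ j, m j ≤ (n:ℝ) - 1 := by
    calc ∑ j, m j ≤ ∑ _j : Fin (n+1), ((n:ℝ) - 1)/((n:ℝ)+1) :=
      Finset.sum_le_sum fun j _ => hmle j
    _ = (n:ℝ) - 1 := hconst
  have hstot : ∑ i, s i = (n:ℝ) := by linarith
  have hmtot : ∑ j, m j = (n:ℝ) - 1 := by linarith
  have hseq : ∀ i, s i = 1 := by
    intro i
    by_contra hc
    have hlt : 1 < s i := lt_of_le_of_ne (hsge1 i) (Ne.symm hc)
    have := Finset.sum_lt_sum (fun i' (_ : i' ∈ Finset.univ) => hsge1 i')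
      ⟨i, Finset.mem_univ i, hlt⟩
    rw [hstot] at this
    simp at this
  have hmeq : ∀ j, m j = ((n:ℝ) - 1)/((n:ℝ)+1) := by
    intro j
    by_contra hc
    have hlt : m j < ((n:ℝ) - 1)/((n:ℝ)+1) := lt_of_le_of_ne (hmle j) hc
    have := Finset.sum_lt_sum (fun j' (_ : j' ∈ Finset.univ) => hmle j')
      ⟨j, Finset.mem_univ j, hlt⟩
    rw [hmtot, hconst] at this
    simp at this
  -- positive part sums
  have hsp : ∀ i, ∑ j, max (l i j) 0 = 1 := by
    intro i
    have : ∑ j, max (l i j) 0 = ∑ j, (max (-(l i j)) 0 + l i j) :=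
      Finset.sum_congr rfl fun j _ => aux_max_sub (l i j)
    rw [this, Finset.sum_add_distrib, hlsum i, add_zero]
    exact hseq i
  -- (iv)
  have hiv : ∀ i, ∑ j : Fin (n + 1), |l i j| = 2 := by
    intro i
    have : ∑ j, |l i j| = ∑ j, (max (l i j) 0 + max (-(l i j)) 0) :=
      Finset.sum_congr rfl fun j _ => aux_abs_eq_max (l i j)
    rw [this, Finset.sum_add_distrib, hsp i]
    have := hseq i
    rw [hs] at this
    dsimp only at this
    rw [this]; norm_num
  -- M j = 1
  have hMsum : ∑ j, M j = (n:ℝ) + 1 := by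
    simp only [hM, Finset.sum_add_distrib, hbsum]
    rw [Finset.sum_comm]
    rw [Finset.sum_congr rfl fun i (_ : i ∈ Finset.univ) => hsp i]
    simp
  have hMge1 : ∀ j, 1 ≤ M j := by
    intro j
    have hvQ : v j ∈ unitCube n :=
      hS (subset_convexHull ℝ _ (Set.mem_range_self j))
    have h := hub j (v j) hvQ
    rw [hlam' j j, if_pos rfl] at h
    exact h
  have hMeq : ∀ j, M j = 1 := by
    intro j
    by_contra hc
    have hlt : 1 < M j := lt_of_le_of_ne (hMge1 j) (Ne.symm hc)
    have := Finset.sum_lt_sum (fun j' (_ : j' ∈ Finset.univ) => hMge1 j')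
      ⟨j, Finset.mem_univ j, hlt⟩
    rw [hMsum] at this
    simp at this
  -- the center of the cube
  set ctr : EuclideanSpace ℝ (Fin n) := (2:ℝ)⁻¹ • ∑ k : Fin n, EuclideanSpace.single k (1:ℝ)
    with hctr
  have hcenter_i : ∀ i : Fin n, ctr i = 1/2 := by
    intro i
    rw [hctr]
    have hsa : (∑ k : Fin n, EuclideanSpace.single k (1:ℝ)) i
        = ∑ k : Fin n, (EuclideanSpace.single k (1:ℝ)) i := by rw [WithLp.ofLp_sum, Finset.sum_apply]
    rw [PiLp.smul_apply, hsa, smul_eq_mul]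
    simp [EuclideanSpace.single_apply]
  have hlamctr : ∀ j, lam j ctr = 1/((n:ℝ)+1) := by
    intro j
    have h1 : ∑ i, max (l i j) 0 = M j - b j := by rw [hM]; ring
    have h2 : ∑ i, max (-(l i j)) 0 = m j + b j := by rw [hm]; ring
    have hls : ∑ i, l i j = (M j - b j) - (m j + b j) := by
      have h3 : ∑ i, l i j = ∑ i, (max (l i j) 0 - max (-(l i j)) 0) :=
        Finset.sum_congr rfl fun i _ => by have := aux_max_sub (l i j); linarith
      rw [h3, Finset.sum_sub_distrib, h1, h2]
    rw [hcoef]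
    have hc2 : ∑ i, l i j * ctr i = (∑ i, l i j) * (1/2) := by
      calc ∑ i, l i j * ctr i = ∑ i, l i j * (1/2) :=
        Finset.sum_congr rfl fun i _ => by rw [hcenter_i i]
      _ = (∑ i, l i j) * (1/2) := (Finset.sum_mul _ _ _).symm
    rw [hc2, hls, hMeq, hmeq]
    field_simp
    ring
  have hctr_eq : ctr = simplexCentroid v := by
    apply B.ext_elem
    intro k
    rw [← hlamB, ← hlamB, hlamctr, hccoord]
  have hci : ∀ i, simplexCentroid v i = 1/2 := fun i => by
    rw [← hctr_eq]; exact hcenter_i i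
  refine ⟨?_, ?_, hci, hiv, ?_, ?_, ?_⟩
  -- (i)
  · intro j
    apply IsGreatest.csSup_eq
    constructor
    · obtain ⟨x, hxV, hxval⟩ := hxp j
      exact ⟨x, hxV, by show lam j x = 1; rw [hxval, hMeq]⟩
    · rintro y ⟨x, hxV, rfl⟩
      exact (hub j x (hcubeV hxV)).trans_eq (hMeq j)
  -- (ii)
  · intro j
    apply IsGreatest.csSup_eq
    constructor
    · obtain ⟨x, hxV, hxval⟩ := hxm j
      refine ⟨x, hxV, ?_⟩
      show -(lam j x) = _
      rw [hxval, neg_neg, hmeq]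
    · rintro y ⟨x, hxV, rfl⟩
      exact (hlb j x (hcubeV hxV)).trans_eq (hmeq j)
  -- (v)
  · intro j
    have h1 : ∑ i, max (l i j) 0 = M j - b j := by rw [hM]; ring
    have h2 : ∑ i, max (-(l i j)) 0 = m j + b j := by rw [hm]; ring
    have : ∑ i, |l i j| = ∑ i, (max (l i j) 0 + max (-(l i j)) 0) :=
      Finset.sum_congr rfl fun i _ => aux_abs_eq_max (l i j)
    rw [this, Finset.sum_add_distrib, h1, h2, hMeq, hmeq]
    field_simp
    ring
  -- (vi) a
  · rintro z ⟨x, hx, rfl⟩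
    rw [hctr_eq]
    apply (hmemS _).2
    intro j
    rw [hhom]
    have h := hK1 x hx j
    have hkey : (1/(n:ℝ)) * ((1 - (n:ℝ))/((n:ℝ)+1)) + (1 - 1/(n:ℝ))/((n:ℝ)+1) = 0 := by
      field_simp
      ring
    have h2 := mul_le_mul_of_nonneg_left h (by positivity : (0:ℝ) ≤ 1/(n:ℝ))
    linarith
  -- (vi) b
  · rintro z ⟨w, hwS, rfl⟩
    have hwQ := hS hwS
    have hn2 : ((n:ℝ)^2) ≠ 0 := by positivity
    have hn1 : (1:ℝ) ≤ (n:ℝ) := by exact_mod_cast hn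
    refine ⟨ctr + ((n:ℝ)^2)⁻¹ •
      ((simplexCentroid v + (n:ℝ) • (w - simplexCentroid v)) - ctr), ?_, ?_⟩
    · intro i
      have hz_i : (simplexCentroid v + (n:ℝ) • (w - simplexCentroid v)) i
          = 1/2 + (n:ℝ) * (w i - 1/2) := by
        simp only [PiLp.add_apply, PiLp.smul_apply, PiLp.sub_apply, smul_eq_mul, hci i]
      show _ ∈ Set.Icc (0:ℝ) 1
      rw [PiLp.add_apply, hcenter_i i, PiLp.smul_apply, PiLp.sub_apply, hcenter_i i, hz_i, smul_eq_mul]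
      have hw1 := (hwQ i).1
      have hw2 := (hwQ i).2
      have hinv : ((n:ℝ)^2)⁻¹ * (n:ℝ) = (n:ℝ)⁻¹ := by
        field_simp
      have hexp : ((n:ℝ)^2)⁻¹ * (1/2 + (n:ℝ) * (w i - 1/2) - 1/2) = (n:ℝ)⁻¹ * (w i - 1/2) := by
        rw [show (1/2 + (n:ℝ) * (w i - 1/2) - 1/2) = (n:ℝ) * (w i - 1/2) by ring,
          ← mul_assoc, hinv]
      rw [hexp]
      have hip : (0:ℝ) ≤ (n:ℝ)⁻¹ := inv_nonneg.mpr (by linarith)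
      have hil : (n:ℝ)⁻¹ ≤ 1 := inv_le_one_of_one_le₀ hn1
      have hA : (n:ℝ)⁻¹ * (w i - 1/2) ≤ (n:ℝ)⁻¹ * (1/2) :=
        mul_le_mul_of_nonneg_left (by linarith) hip
      have hB : (n:ℝ)⁻¹ * (-(1/2)) ≤ (n:ℝ)⁻¹ * (w i - 1/2) :=
        mul_le_mul_of_nonneg_left (by linarith) hip
      constructor <;> nlinarith
    · dsimp only
      rw [add_sub_cancel_left, smul_inv_smul₀ hn2, add_sub_cancel]
end

section
/- If n is even, then there exists no nondegenerate n-dimensional simplex S all of whose vertices are vertices of the unit cube Q_n and which satisfies S ⊆ Q_n ⊆ nS. -/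
open Set MeasureTheory Finset Metric

/-- If `n` is even, no nondegenerate simplex with all vertices among the
vertices of `Q_n` satisfies `S ⊆ Q_n ⊆ nS`. -/
theorem no_cube_vertex_simplex_absorbing_even (n : ℕ) (hn : 0 < n) (he : Even n) :
    ¬ ∃ v : Fin (n + 1) → EuclideanSpace ℝ (Fin n),
        AffineIndependent ℝ v ∧ (∀ j, v j ∈ cubeVertices n) ∧
        simplexSet v ⊆ unitCube n ∧ unitCube n ⊆ simplexHomothet v n := by
    classical
  rintro ⟨v, hind, hvert, hS, habs⟩
  have hnpos : (0:ℝ) < (n:ℝ) + 1 := by positivity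
  have hcard : Fintype.card (Fin (n+1)) = Module.finrank ℝ (EuclideanSpace ℝ (Fin n)) + 1 := by
    simp [finrank_euclideanSpace_fin]
  have htot : affineSpan ℝ (Set.range v) = ⊤ :=
    hind.affineSpan_eq_top_iff_card_eq_finrank_add_one.mpr hcard
  let b : AffineBasis (Fin (n+1)) ℝ (EuclideanSpace ℝ (Fin n)) := ⟨v, hind, htot⟩
  have hb : ⇑b = v := rfl
  have hsum1 : (Finset.univ.sum (Finset.univ.centroidWeights ℝ : Fin (n+1) → ℝ)) = 1 :=
    Finset.univ.sum_centroidWeights_eq_one_of_card_ne_zero ℝ (by simp)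
  have hcoordc : ∀ j, b.coord j (simplexCentroid v) = ((n:ℝ)+1)⁻¹ := by
    intro j
    have h1 : simplexCentroid v
        = Finset.univ.affineCombination ℝ (⇑b) (Finset.univ.centroidWeights ℝ) := by
      rw [hb]; exact Finset.univ.centroid_def (k := ℝ) v
    rw [h1, b.coord_apply_combination_of_mem (Finset.mem_univ j) hsum1,
      Finset.centroidWeights_apply]
    norm_num
  have hnonneg : ∀ x ∈ simplexSet v, ∀ j, 0 ≤ b.coord j x := by
    intro x hx j
    have h2 : simplexSet v = { y | ∀ i, 0 ≤ b.coord i y } := by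
      rw [simplexSet, ← hb]; exact b.convexHull_eq_nonneg_coord
    rw [h2] at hx
    exact hx j
  -- lower bound for barycentric coordinates on the cube
  have key : ∀ u ∈ unitCube n, ∀ j, ((1:ℝ) - n) / ((n:ℝ)+1) ≤ b.coord j u := by
    intro u hu j
    obtain ⟨x, hx, hux⟩ := habs hu
    have hxj : 0 ≤ b.coord j x := hnonneg x hx j
    have hline : u = AffineMap.lineMap (simplexCentroid v) x (n:ℝ) := by
      rw [← hux, AffineMap.lineMap_apply]
      simp only [vsub_eq_sub, vadd_eq_add]
      abel
    have h3 : b.coord j u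
        = (n:ℝ) * (b.coord j x - b.coord j (simplexCentroid v))
          + b.coord j (simplexCentroid v) := by
      rw [hline, AffineMap.apply_lineMap, AffineMap.lineMap_apply]
      simp [vsub_eq_sub, vadd_eq_add]
    rw [h3, hcoordc j]
    have hn0 : (0:ℝ) ≤ (n:ℝ) := Nat.cast_nonneg n
    have h4 : (0:ℝ) ≤ (n:ℝ) * b.coord j x := mul_nonneg hn0 hxj
    have h5 : ((1:ℝ) - n) / ((n:ℝ)+1)
        = (n:ℝ) * (0 - ((n:ℝ)+1)⁻¹) + ((n:ℝ)+1)⁻¹ := by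
      field_simp
      ring
    rw [h5]
    nlinarith [h4]
  -- the center of the cube
  set m : EuclideanSpace ℝ (Fin n) := WithLp.toLp 2 (fun _ => (1:ℝ)/2) with hmdef
  have hmQ : m ∈ unitCube n := by
    intro i; constructor <;> norm_num [hmdef]
  -- coordinates of the center are all ≥ 1/(n+1)
  have hge : ∀ j, ((n:ℝ)+1)⁻¹ ≤ b.coord j m := by
    intro j
    set u : EuclideanSpace ℝ (Fin n) := WithLp.toLp 2 (fun i => 1 - v j i) with hudef
    have huQ : u ∈ unitCube n := by
      intro i
      rcases hvert j i with h | h <;> simp [hudef, h]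
    have hum : m = AffineMap.lineMap u (v j) ((1:ℝ)/2) := by
      ext i
      show (1:ℝ)/2 = (AffineMap.lineMap u (v j) ((1:ℝ)/2) : EuclideanSpace ℝ (Fin n)) i
      rw [AffineMap.lineMap_apply]
      show (1:ℝ)/2 = ((1:ℝ)/2) * (v j i - (1 - v j i)) + (1 - v j i)
      ring
    have hcv : b.coord j (v j) = 1 := by
      rw [← hb]; simp
    have h6 : b.coord j m
        = ((1:ℝ)/2) * (b.coord j (v j) - b.coord j u) + b.coord j u := by
      rw [hum, AffineMap.apply_lineMap, AffineMap.lineMap_apply]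
      simp [vsub_eq_sub, vadd_eq_add]
    have h7 := key u huQ j
    rw [h6, hcv]
    have h8 : ((n:ℝ)+1)⁻¹ = ((1:ℝ)/2) * (1 - ((1:ℝ)-n)/((n:ℝ)+1))
        + ((1:ℝ)-n)/((n:ℝ)+1) := by
      field_simp
      ring
    rw [h8]
    linarith [h7]
  -- all coordinates of the center equal 1/(n+1)
  have hsm : ∑ j, b.coord j m = 1 := b.sum_coord_apply_eq_one m
  have hconst : ∑ j : Fin (n+1), ((n:ℝ)+1)⁻¹ = 1 := by
    rw [Finset.sum_const]
    simp
    rw [mul_inv_cancel₀ (by linarith : ((n:ℝ)+1) ≠ 0)]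
  have heq : ∀ j, b.coord j m = ((n:ℝ)+1)⁻¹ := by
    intro j
    by_contra hne
    have hlt : ((n:ℝ)+1)⁻¹ < b.coord j m := lt_of_le_of_ne (hge j) (Ne.symm hne)
    have : (1:ℝ) < 1 := by
      calc (1:ℝ) = ∑ _j : Fin (n+1), ((n:ℝ)+1)⁻¹ := hconst.symm
        _ < ∑ j, b.coord j m :=
            Finset.sum_lt_sum (fun i _ => hge i) ⟨j, Finset.mem_univ j, hlt⟩
        _ = 1 := hsm
    exact lt_irrefl _ this
  -- reconstruct the center from its coordinates
  have hrep : ∑ j, b.coord j m • v j = m := by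
    rw [← hb]; exact b.linear_combination_coord_eq_self m
  have i0 : Fin n := ⟨0, hn⟩
  have h9 : ∑ j, ((n:ℝ)+1)⁻¹ * v j i0 = 1/2 := by
    have h10 := congrArg (EuclideanSpace.proj (𝕜 := ℝ) i0) hrep
    rw [map_sum] at h10
    simp only [_root_.map_smul, smul_eq_mul] at h10
    simp only [PiLp.proj_apply] at h10
    have h11 : m i0 = 1/2 := rfl
    rw [h11] at h10
    rw [← h10]
    exact Finset.sum_congr rfl (fun j _ => by rw [heq j])
  have h12 : ∑ j, v j i0 = ((n:ℝ)+1)/2 := by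
    rw [← Finset.mul_sum] at h9
    field_simp at h9 ⊢
    linarith
  have h13 : ∑ j, v j i0 = ((∑ j, if v j i0 = 1 then 1 else 0 : ℕ) : ℝ) := by
    push_cast
    exact Finset.sum_congr rfl (fun j _ => by rcases hvert j i0 with h | h <;> simp [h])
  set k : ℕ := ∑ j, if v j i0 = 1 then 1 else 0 with hk
  have h14 : 2 * (k:ℝ) = (n:ℝ) + 1 := by
    rw [h13] at h12
    linarith
  have h15 : 2 * k = n + 1 := by exact_mod_cast h14
  obtain ⟨p, hp⟩ := he
  omega
end

section
/- Suppose S is a nondegenerate n-dimensional simplex with S ⊆ Q_n ⊆ nS. Then replacing any vertex of S by an arbitrary point of Q_n does not increase the volume of the simplex: for every j and every y ∈ Q_n, the simplex S′ obtained from S by replacing x^(j) with y satisfies vol(S′) ≤ vol(S). -/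
open Set MeasureTheory Finset Metric

noncomputable section QRaux

variable {n : ℕ}

/-- an affine basis from `n+1` affinely independent points in `ℝ^n` -/
def qrBasis (v : Fin (n + 1) → EuclideanSpace ℝ (Fin n))
    (hv : AffineIndependent ℝ v) : AffineBasis (Fin (n + 1)) ℝ (EuclideanSpace ℝ (Fin n)) :=
  ⟨v, hv, by
    rw [hv.affineSpan_eq_top_iff_card_eq_finrank_add_one]
    simp [finrank_euclideanSpace_fin]⟩

@[simp] lemma qrBasis_apply (v : Fin (n + 1) → EuclideanSpace ℝ (Fin n))
    (hv : AffineIndependent ℝ v) (k : Fin (n + 1)) : qrBasis v hv k = v k := rfl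

lemma qr_euclid_decomp (x : EuclideanSpace ℝ (Fin n)) :
    x = ∑ i, x i • EuclideanSpace.single i (1 : ℝ) := by
  ext i
  rw [show ((∑ k, x k • EuclideanSpace.single k (1:ℝ)) i)
      = ∑ k, (x k • EuclideanSpace.single k (1:ℝ)) i from by rw [WithLp.ofLp_sum, Finset.sum_apply]]
  simp [EuclideanSpace.single_apply]

/-- expansion of an affine functional in coordinates -/
lemma qr_affine_expand (f : EuclideanSpace ℝ (Fin n) →ᵃ[ℝ] ℝ) (x : EuclideanSpace ℝ (Fin n)) :
    f x = f 0 + ∑ i, x i * f.linear (EuclideanSpace.single i (1 : ℝ)) := by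
  conv_lhs => rw [qr_euclid_decomp x]
  have h : (∑ i, x i • EuclideanSpace.single i (1:ℝ)) = (∑ i, x i • EuclideanSpace.single i (1:ℝ)) +ᵥ (0 : EuclideanSpace ℝ (Fin n)) := by
    simp
  rw [h, AffineMap.map_vadd]
  simp [map_sum, add_comm, LinearMap.map_smul, smul_eq_mul]

/-- membership in the simplex means all barycentric coordinates nonnegative -/
lemma qr_mem_simplex_iff (v : Fin (n + 1) → EuclideanSpace ℝ (Fin n))
    (hv : AffineIndependent ℝ v) (x : EuclideanSpace ℝ (Fin n)) :
    x ∈ simplexSet v ↔ ∀ k, 0 ≤ (qrBasis v hv).coord k x := by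
  have : simplexSet v = convexHull ℝ (Set.range ⇑(qrBasis v hv)) := rfl
  rw [this, AffineBasis.convexHull_eq_nonneg_coord]
  rfl

/-- the barycentric coordinates of the centroid -/
lemma qr_coord_centroid (v : Fin (n + 1) → EuclideanSpace ℝ (Fin n))
    (hv : AffineIndependent ℝ v) (k : Fin (n + 1)) :
    (qrBasis v hv).coord k (simplexCentroid v) = (n + 1 : ℝ)⁻¹ := by
  have hw : (Finset.univ : Finset (Fin (n+1))).sum (Finset.univ.centroidWeights ℝ) = 1 :=
    Finset.sum_centroidWeights_eq_one_of_nonempty ℝ _ Finset.univ_nonempty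
  have : simplexCentroid v
      = Finset.univ.affineCombination ℝ (⇑(qrBasis v hv)) (Finset.univ.centroidWeights ℝ) := by
    rfl
  rw [this, AffineBasis.coord_apply_combination_of_mem _ (Finset.mem_univ k) hw]
  simp [Finset.centroidWeights_apply]


/-- Lower bound on barycentric coordinates over the cube, from `Q ⊆ nS`. -/
lemma qr_coord_lower (v : Fin (n + 1) → EuclideanSpace ℝ (Fin n))
    (hv : AffineIndependent ℝ v) (hQ : unitCube n ⊆ simplexHomothet v n)
    {z : EuclideanSpace ℝ (Fin n)} (hz : z ∈ unitCube n) (k : Fin (n + 1)) :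
    ((1 : ℝ) - n) / (n + 1) ≤ (qrBasis v hv).coord k z := by
  obtain ⟨x, hx, hxz⟩ := hQ hz
  set b := qrBasis v hv
  have h0 : 0 ≤ b.coord k x := (qr_mem_simplex_iff v hv x).mp hx k
  have hc : b.coord k (simplexCentroid v) = (n + 1 : ℝ)⁻¹ := qr_coord_centroid v hv k
  have hzeq : z = ((n : ℝ) • (x - simplexCentroid v)) +ᵥ simplexCentroid v := by
    rw [← hxz]; simp [vadd_eq_add]; abel
  have : b.coord k z = (n : ℝ) * (b.coord k x - b.coord k (simplexCentroid v))
      + b.coord k (simplexCentroid v) := by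
    rw [hzeq, AffineMap.map_vadd]
    have : (b.coord k).linear (x - simplexCentroid v)
        = b.coord k x - b.coord k (simplexCentroid v) :=
      (b.coord k).linearMap_vsub x (simplexCentroid v)
    rw [LinearMap.map_smul, this]
    simp [vadd_eq_add, smul_eq_mul]
  rw [this, hc]
  have hn1 : (0:ℝ) < n + 1 := by positivity
  rw [div_le_iff₀ hn1]
  have : (n:ℝ) * ((n:ℝ)+1)⁻¹ = (n:ℝ)/((n:ℝ)+1) := by ring
  have hinv : ((n:ℝ)+1) * ((n:ℝ)+1)⁻¹ = 1 := by
    field_simp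
  nlinarith [mul_nonneg (Nat.cast_nonneg (α := ℝ) n) h0]


/-- Upper bound: each barycentric coordinate is at most 1 on the cube. -/
lemma qr_coord_upper (v : Fin (n + 1) → EuclideanSpace ℝ (Fin n))
    (hv : AffineIndependent ℝ v) (hS : simplexSet v ⊆ unitCube n)
    (hQ : unitCube n ⊆ simplexHomothet v n)
    {y : EuclideanSpace ℝ (Fin n)} (hy : y ∈ unitCube n) (j : Fin (n + 1)) :
    (qrBasis v hv).coord j y ≤ 1 := by
  set b := qrBasis v hv with hb
  set l : Fin (n+1) → Fin n → ℝ :=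
    fun k i => (b.coord k).linear (EuclideanSpace.single i 1) with hl
  set M : Fin (n+1) → ℝ := fun k => b.coord k 0 + ∑ i, max (l k i) 0 with hM
  set c : ℝ := ((1:ℝ) - n)/(n+1) with hc
  have hB1 : ∀ z ∈ unitCube n, ∀ k, b.coord k z ≤ M k := by
    intro z hz k
    rw [qr_affine_expand (b.coord k) z]
    refine add_le_add_right (Finset.sum_le_sum fun i _ => ?_) _
    rcases le_or_gt 0 (l k i) with h | h
    · exact le_max_of_le_left (by nlinarith [(hz i).1, (hz i).2])
    · exact le_max_of_le_right (by nlinarith [(hz i).1])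
  have hvQ : ∀ k, v k ∈ unitCube n :=
    fun k => hS (subset_convexHull ℝ _ (Set.mem_range_self k))
  have hB2 : ∀ k, (1:ℝ) ≤ M k := by
    intro k
    have h := hB1 (v k) (hvQ k) k
    rwa [show b.coord k (v k) = 1 from b.coord_apply_eq k] at h
  have hB3 : ∀ i, ∑ k, l k i = 0 := by
    intro i
    have h1 : ∑ k, b.coord k (EuclideanSpace.single i (1:ℝ)) = 1 := b.sum_coord_apply_eq_one _
    have h2 : ∀ k, b.coord k (EuclideanSpace.single i (1:ℝ)) = b.coord k 0 + l k i := by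
      intro k
      rw [qr_affine_expand (b.coord k)]
      congr 1
      have e : ∀ i', (EuclideanSpace.single i (1:ℝ)) i' * l k i'
          = if i' = i then l k i' else 0 := by
        intro i'
        rcases eq_or_ne i' i with h|h
        · simp [EuclideanSpace.single_apply, h]
        · simp [EuclideanSpace.single_apply, h]
      rw [Finset.sum_congr rfl (fun i' _ => e i'), Finset.sum_ite_eq' Finset.univ i]
      simp
    rw [Finset.sum_congr rfl (fun k _ => h2 k), Finset.sum_add_distrib,
      b.sum_coord_apply_eq_one 0] at h1
    linarith
  have hB5 : ∀ k, ∑ i, max (-(l k i)) 0 ≤ b.coord k 0 - c := by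
    intro k
    set z : EuclideanSpace ℝ (Fin n) := WithLp.toLp 2 (fun i => if l k i ≤ 0 then (1:ℝ) else 0) with hz
    have hzQ : z ∈ unitCube n := by
      intro i
      show (if l k i ≤ 0 then (1:ℝ) else 0) ∈ Set.Icc (0:ℝ) 1
      split <;> norm_num
    have h := qr_coord_lower v hv hQ hzQ k
    rw [qr_affine_expand (b.coord k) z] at h
    have e : ∀ i, z i * l k i = -(max (-(l k i)) 0) := by
      intro i
      show (if l k i ≤ 0 then (1:ℝ) else 0) * l k i = _
      rcases le_or_gt (l k i) 0 with h'|h'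
      · rw [if_pos h', max_eq_left (by linarith)]; ring
      · rw [if_neg (not_le.mpr h'), max_eq_right (by linarith)]; ring
    rw [Finset.sum_congr rfl (fun i _ => e i), Finset.sum_neg_distrib] at h
    linarith
  have hB4 : ∀ i, ∑ k, max (l k i) 0 = ∑ k, max (-(l k i)) 0 := by
    intro i
    have key : ∀ a : ℝ, max a 0 = max (-a) 0 + a := by
      intro a; rcases le_total a 0 with h|h
      · rw [max_eq_right h, max_eq_left (by linarith)]; ring
      · rw [max_eq_left h, max_eq_right (by linarith)]; ring
    calc ∑ k, max (l k i) 0 = ∑ k, (max (-(l k i)) 0 + l k i) :=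
          Finset.sum_congr rfl (fun k _ => key _)
      _ = ∑ k, max (-(l k i)) 0 + ∑ k, l k i := Finset.sum_add_distrib
      _ = ∑ k, max (-(l k i)) 0 := by rw [hB3 i, add_zero]
  have hMsum : ∑ k, M k ≤ (n:ℝ) + 1 := by
    have e1 : ∑ k, M k = 1 + ∑ k, ∑ i, max (l k i) 0 := by
      rw [hM, Finset.sum_add_distrib, b.sum_coord_apply_eq_one 0]
    have e2 : ∑ k, ∑ i, max (l k i) 0 = ∑ k, ∑ i, max (-(l k i)) 0 := by
      calc ∑ k, ∑ i, max (l k i) 0 = ∑ i, ∑ k, max (l k i) 0 := Finset.sum_comm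
        _ = ∑ i, ∑ k, max (-(l k i)) 0 := Finset.sum_congr rfl (fun i _ => hB4 i)
        _ = ∑ k, ∑ i, max (-(l k i)) 0 := Finset.sum_comm
    have e3 : ∑ k, ∑ i, max (-(l k i)) 0 ≤ ∑ k : Fin (n+1), (b.coord k 0 - c) :=
      Finset.sum_le_sum (fun k _ => hB5 k)
    have e4 : ∑ k : Fin (n+1), (b.coord k 0 - c) = 1 - ((n:ℝ)+1)*c := by
      rw [Finset.sum_sub_distrib, b.sum_coord_apply_eq_one 0, Finset.sum_const,
        Finset.card_univ, Fintype.card_fin, nsmul_eq_mul]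
      push_cast; ring
    have e5 : ((n:ℝ)+1)*c = 1 - n := by
      have hne : ((n:ℝ)+1) ≠ 0 := by positivity
      rw [hc]; field_simp
    linarith
  have hge : (n:ℝ) ≤ ∑ k ∈ Finset.univ.erase j, M k := by
    have h1 : (Finset.univ.erase j).card • (1:ℝ) ≤ ∑ k ∈ Finset.univ.erase j, M k :=
      Finset.card_nsmul_le_sum _ _ _ (fun k _ => hB2 k)
    have h2 : (Finset.univ.erase j).card = n := by
      rw [Finset.card_erase_of_mem (Finset.mem_univ j), Finset.card_univ, Fintype.card_fin]
      omega
    rw [h2, nsmul_eq_mul, mul_one] at h1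
    exact h1
  have hMj : M j ≤ 1 := by
    have h := Finset.add_sum_erase _ M (Finset.mem_univ j)
    linarith
  exact le_trans (hB1 y hy j) hMj


/-- replacing vertex `j` scales the simplex volume by `|λ_j(y)|`. -/
lemma qr_volume (hn : 0 < n) (v : Fin (n + 1) → EuclideanSpace ℝ (Fin n))
    (hv : AffineIndependent ℝ v) (j : Fin (n + 1)) (y : EuclideanSpace ℝ (Fin n)) :
    volume (simplexSet (Function.update v j y))
      = ENNReal.ofReal |(qrBasis v hv).coord j y| * volume (simplexSet v) := by
  classical
  set b := qrBasis v hv with hb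
  set w : Fin (n+1) → EuclideanSpace ℝ (Fin n) := Function.update v j y with hw
  set L : EuclideanSpace ℝ (Fin n) →ₗ[ℝ] EuclideanSpace ℝ (Fin n) :=
    ∑ k, ((b.coord k).linear).smulRight (w k) with hL
  set c0 : EuclideanSpace ℝ (Fin n) := ∑ k, (b.coord k 0) • (w k) with hc0
  have hLapp : ∀ x, c0 + L x = ∑ k, (b.coord k x) • w k := by
    intro x
    rw [hL, LinearMap.sum_apply, hc0, ← Finset.sum_add_distrib]
    refine Finset.sum_congr rfl fun k _ => ?_
    rw [LinearMap.smulRight_apply, ← add_smul]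
    congr 1
    have hx : x = x +ᵥ (0 : EuclideanSpace ℝ (Fin n)) := by simp
    conv_rhs => rw [hx]
    rw [AffineMap.map_vadd]
    simp [vadd_eq_add, add_comm]
  have hTv : ∀ m, c0 + L (v m) = w m := by
    intro m
    rw [hLapp]
    have hcoord : ∀ k, b.coord k (v m) = if k = m then (1:ℝ) else 0 :=
      fun k => b.coord_apply k m
    rw [Finset.sum_congr rfl fun k _ => by rw [hcoord k]]
    simp [ite_smul]
  set T : EuclideanSpace ℝ (Fin n) →ᵃ[ℝ] EuclideanSpace ℝ (Fin n) :=
    AffineMap.mk' (fun x => c0 + L x) L 0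
      (fun p => by simp [vadd_eq_add]; abel) with hT
  have hTapp : ∀ x, T x = c0 + L x := fun x => rfl
  have hTS : T '' simplexSet v = simplexSet w := by
    rw [simplexSet, AffineMap.image_convexHull, ← Set.range_comp]
    have : ⇑T ∘ v = w := funext fun m => by rw [Function.comp_apply, hTapp, hTv]
    rw [this]
    rfl
  have hvol : volume (T '' simplexSet v)
      = ENNReal.ofReal |LinearMap.det L| * volume (simplexSet v) := by
    have himg : ⇑T '' simplexSet v = (fun x => c0 + x) '' (⇑L '' simplexSet v) := by
      rw [Set.image_image]
      exact Set.image_congr fun x _ => hTapp x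
    rw [himg, Set.image_add_left, measure_preimage_add, Measure.addHaar_image_linearMap]
  -- determinant computation
  haveI : Nontrivial (Fin (n+1)) := Fin.nontrivial_iff_two_le.mpr (by omega)
  obtain ⟨i0, hi0⟩ := exists_ne j
  set B := b.basisOf i0 with hB
  have hBapp : ∀ k : {k : Fin (n+1) // k ≠ i0}, B k = v ↑k - v i0 := by
    intro k
    rw [hB, AffineBasis.basisOf_apply]
    rfl
  have hupd_ne : w i0 = v i0 := Function.update_of_ne hi0 y v
  have hLv : ∀ m, L (v m) = w m - c0 := fun m => by rw [← hTv m]; abel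
  have hLB : ∀ k : {k : Fin (n+1) // k ≠ i0}, L (B k) = w ↑k - w i0 := by
    intro k
    rw [hBapp k, map_sub, hLv, hLv]
    abel
  have hsum1 : ∑ m, b.coord m y = 1 := b.sum_coord_apply_eq_one y
  have hyrep : y = ∑ m, (b.coord m y) • v m := by
    conv_lhs => rw [← b.affineCombination_coord_eq_self y]
    exact Finset.univ.affineCombination_eq_linear_combination _ _ hsum1
  have hy_exp : y - v i0 = ∑ m : {k : Fin (n+1) // k ≠ i0}, (b.coord ↑m y) • B m := by
    have hsub : ∑ m : {k : Fin (n+1) // k ≠ i0}, (b.coord ↑m y) • B m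
        = ∑ m ∈ Finset.univ.erase i0, (b.coord m y) • (v m - v i0) := by
      rw [Finset.sum_subtype (p := fun k => k ≠ i0) (Finset.univ.erase i0)
        (fun x => by simp [Finset.mem_erase]) (fun m => (b.coord m y) • (v m - v i0))]
      exact Finset.sum_congr rfl fun m _ => by rw [hBapp m]
    have h5 : ∑ m ∈ Finset.univ.erase i0, b.coord m y = 1 - b.coord i0 y := by
      have h := Finset.add_sum_erase Finset.univ (fun m => b.coord m y) (Finset.mem_univ i0)
      rw [hsum1] at h
      linarith
    have h6 : ∑ m ∈ Finset.univ.erase i0, (b.coord m y) • v m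
        = y - (b.coord i0 y) • v i0 := by
      have h := Finset.add_sum_erase Finset.univ (fun m => (b.coord m y) • v m)
        (Finset.mem_univ i0)
      rw [← hyrep] at h
      exact (eq_sub_of_add_eq' h).symm ▸ rfl
    have hsplit : ∑ m ∈ Finset.univ.erase i0, (b.coord m y) • (v m - v i0)
        = (∑ m ∈ Finset.univ.erase i0, (b.coord m y) • v m)
          - (∑ m ∈ Finset.univ.erase i0, b.coord m y) • v i0 := by
      rw [Finset.sum_smul, ← Finset.sum_sub_distrib]
      exact Finset.sum_congr rfl fun m _ => smul_sub _ _ _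
    rw [hsub, hsplit, h5, h6, sub_smul, one_smul]
    abel
  have hrepr : ∀ m : {k : Fin (n+1) // k ≠ i0}, B.repr (y - v i0) m = b.coord ↑m y := by
    intro m
    rw [hy_exp]
    exact congrFun (B.repr_sum_self _) m
  set j' : {k : Fin (n+1) // k ≠ i0} := ⟨j, Ne.symm hi0⟩ with hj'
  have hdet : LinearMap.det L = b.coord j y := by
    have hmat : LinearMap.toMatrix B B L
        = Matrix.updateCol (1 : Matrix {k : Fin (n+1) // k ≠ i0} {k : Fin (n+1) // k ≠ i0} ℝ)
          j' (fun m : {k : Fin (n+1) // k ≠ i0} => b.coord ↑m y) := by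
      ext m k
      rw [LinearMap.toMatrix_apply]
      by_cases hk : k = j'
      · subst hk
        rw [Matrix.updateCol_self]
        have hwj : w ↑j' = y := by rw [hj']; exact Function.update_self j y v
        rw [hLB, hwj, hupd_ne, hrepr]
      · rw [Matrix.updateCol_ne hk]
        have hkj : (↑k : Fin (n+1)) ≠ j := fun h => hk (Subtype.ext (by rw [hj']; exact h))
        have hLBk : L (B k) = B k := by
          rw [hLB, hupd_ne, hw, Function.update_of_ne hkj, ← hBapp]
        rw [hLBk, B.repr_self, Matrix.one_apply, Finsupp.single_apply]
        by_cases hmk : m = k <;> simp [hmk, eq_comm]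
    rw [← LinearMap.det_toMatrix B L, hmat, ← Matrix.cramer_apply, Matrix.cramer_one]
    rfl
  rw [← hTS, hvol, hdet]

end QRaux

/-- If `S ⊆ Q_n ⊆ nS`, then replacing any vertex of `S` by any point of
`Q_n` does not increase the volume of the simplex. -/
theorem quasi_rigid_volume_not_increase (n : ℕ) (hn : 0 < n)
    (v : Fin (n + 1) → EuclideanSpace ℝ (Fin n)) (hv : AffineIndependent ℝ v)
    (hS : simplexSet v ⊆ unitCube n) (hQ : unitCube n ⊆ simplexHomothet v n)
    (j : Fin (n + 1)) (y : EuclideanSpace ℝ (Fin n)) (hy : y ∈ unitCube n) :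
    volume (simplexSet (Function.update v j y)) ≤ volume (simplexSet v) := by
  have habs : |(qrBasis v hv).coord j y| ≤ 1 := by
    rw [abs_le]
    refine ⟨?_, qr_coord_upper v hv hS hQ hy j⟩
    have h := qr_coord_lower v hv hQ hy j
    have hn1 : (0:ℝ) < (n:ℝ) + 1 := by positivity
    have h2 : (-1:ℝ) ≤ ((1:ℝ) - n) / ((n:ℝ) + 1) := by
      rw [le_div_iff₀ hn1]
      linarith
    linarith
  rw [qr_volume hn v hv j y]
  calc ENNReal.ofReal |(qrBasis v hv).coord j y| * volume (simplexSet v)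
      ≤ 1 * volume (simplexSet v) :=
        mul_le_mul_left (ENNReal.ofReal_le_one.mpr habs) _
    _ = volume (simplexSet v) := one_mul _
end

section
/- Let S ⊆ Q_n be a nondegenerate n-dimensional simplex with Q_n ⊄ S, with basic Lagrange polynomials λ_1,…,λ_{n+1}. A vertex v of Q_n belongs to the j-th (n−1)-dimensional face of the simplex ξ(S)S — the face contained in the hyperplane {x ∈ ℝ^n : λ_j(x) = (1−ξ(S))/(n+1)} — if and only if −λ_j(v) = max_{1≤k≤n+1} max_{x ∈ ver(Q_n)} (−λ_k(x)). -/
open Set MeasureTheory Finset Metric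

namespace VertexFaceAux

open Set Finset

variable {n : ℕ}

/-- Euclidean vector as sum of coordinates times standard basis vectors. -/
lemma euclid_eq_sum (x : EuclideanSpace ℝ (Fin n)) :
    x = ∑ i, x i • EuclideanSpace.single i (1 : ℝ) := by
  ext j
  have h : (∑ i, x i • EuclideanSpace.single i (1:ℝ)) j
      = ∑ i, (x i • EuclideanSpace.single i (1:ℝ)) j :=
    by rw [WithLp.ofLp_sum]; exact Finset.sum_apply j Finset.univ _
  rw [h]
  simp [EuclideanSpace.single_apply]

lemma lin_sum (g : EuclideanSpace ℝ (Fin n) →ₗ[ℝ] ℝ) (x : EuclideanSpace ℝ (Fin n)) :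
    g x = ∑ i, x i * g (EuclideanSpace.single i 1) := by
  conv_lhs => rw [euclid_eq_sum x]
  simp [map_sum]

lemma affine_decomp (f : EuclideanSpace ℝ (Fin n) →ᵃ[ℝ] ℝ) (x : EuclideanSpace ℝ (Fin n)) :
    f x = f.linear x + f 0 := by
  have := f.map_vadd 0 x
  simpa using this

/-- The affine basis determined by an affinely independent family of `n+1` points. -/
noncomputable def auxBasis (v : Fin (n + 1) → EuclideanSpace ℝ (Fin n))
    (hv : AffineIndependent ℝ v) : AffineBasis (Fin (n+1)) ℝ (EuclideanSpace ℝ (Fin n)) :=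
  ⟨v, hv, hv.affineSpan_eq_top_iff_card_eq_finrank_add_one.mpr (by simp)⟩

lemma lam_eq_coord (v : Fin (n + 1) → EuclideanSpace ℝ (Fin n)) (hv : AffineIndependent ℝ v)
    (lam : Fin (n + 1) → (EuclideanSpace ℝ (Fin n) →ᵃ[ℝ] ℝ))
    (hlam : IsLagrangeBasis v lam) (j : Fin (n+1))
    (x : EuclideanSpace ℝ (Fin n)) : lam j x = (auxBasis v hv).coord j x := by
  set b := auxBasis v hv with hb
  have hcoe : ⇑b = v := rfl
  have hsum : ∑ i, b.coord i x = 1 := b.sum_coord_apply_eq_one x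
  conv_lhs => rw [← b.affineCombination_coord_eq_self x]
  rw [Finset.map_affineCombination _ _ _ hsum]
  rw [Finset.univ.affineCombination_eq_linear_combination _ _ hsum]
  simp [hcoe, hlam j]

lemma mem_simplexSet_iff (v : Fin (n + 1) → EuclideanSpace ℝ (Fin n))
    (hv : AffineIndependent ℝ v)
    (lam : Fin (n + 1) → (EuclideanSpace ℝ (Fin n) →ᵃ[ℝ] ℝ))
    (hlam : IsLagrangeBasis v lam) (x : EuclideanSpace ℝ (Fin n)) :
    x ∈ simplexSet v ↔ ∀ k, 0 ≤ lam k x := by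
  have h : simplexSet v = {y | ∀ i, 0 ≤ (auxBasis v hv).coord i y} :=
    (auxBasis v hv).convexHull_eq_nonneg_coord
  rw [h, Set.mem_setOf_eq]
  exact forall_congr' fun k => by rw [lam_eq_coord v hv lam hlam]

lemma lam_centroid (v : Fin (n + 1) → EuclideanSpace ℝ (Fin n)) (hv : AffineIndependent ℝ v)
    (lam : Fin (n + 1) → (EuclideanSpace ℝ (Fin n) →ᵃ[ℝ] ℝ))
    (hlam : IsLagrangeBasis v lam) (k : Fin (n+1)) :
    lam k (simplexCentroid v) = (((n : ℝ) + 1))⁻¹ := by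
  rw [lam_eq_coord v hv lam hlam]
  have h : simplexCentroid v = Finset.univ.centroid ℝ ⇑(auxBasis v hv) := rfl
  rw [h, (auxBasis v hv).coord_apply_centroid (Finset.mem_univ k)]
  simp

lemma lam_homothet_pt (v : Fin (n + 1) → EuclideanSpace ℝ (Fin n)) (hv : AffineIndependent ℝ v)
    (lam : Fin (n + 1) → (EuclideanSpace ℝ (Fin n) →ᵃ[ℝ] ℝ))
    (hlam : IsLagrangeBasis v lam) (k : Fin (n+1)) (s : ℝ) (x : EuclideanSpace ℝ (Fin n)) :
    lam k (simplexCentroid v + s • (x - simplexCentroid v)) =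
      ((n : ℝ) + 1)⁻¹ + s * (lam k x - ((n : ℝ) + 1)⁻¹) := by
  set c := simplexCentroid v
  have h1 : lam k (s • (x - c) +ᵥ c) = (lam k).linear (s • (x - c)) +ᵥ lam k c :=
    (lam k).map_vadd c (s • (x - c))
  have h2 : (lam k).linear (x - c) = lam k x - lam k c := (lam k).linearMap_vsub x c
  have h3 : lam k c = ((n : ℝ) + 1)⁻¹ := lam_centroid v hv lam hlam k
  have h4 : simplexCentroid v + s • (x - c) = s • (x - c) +ᵥ c := by
    show c + s • (x - c) = s • (x - c) + c
    abel
  rw [h4, h1, LinearMap.map_smul, smul_eq_mul, h2, h3]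
  show s * (lam k x - ((n:ℝ)+1)⁻¹) + ((n:ℝ)+1)⁻¹ = _
  ring

lemma mem_homothet_iff (v : Fin (n + 1) → EuclideanSpace ℝ (Fin n)) (hv : AffineIndependent ℝ v)
    (lam : Fin (n + 1) → (EuclideanSpace ℝ (Fin n) →ᵃ[ℝ] ℝ))
    (hlam : IsLagrangeBasis v lam) {σ : ℝ} (hσ : 0 < σ) (z : EuclideanSpace ℝ (Fin n)) :
    z ∈ simplexHomothet v σ ↔ ∀ k, (1 - σ) / ((n : ℝ) + 1) ≤ lam k z := by
  have hN : (0:ℝ) < (n : ℝ) + 1 := by positivity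
  set c := simplexCentroid v with hc
  constructor
  · rintro ⟨x, hx, rfl⟩ k
    have hx0 : 0 ≤ lam k x := (mem_simplexSet_iff v hv lam hlam x).mp hx k
    rw [lam_homothet_pt v hv lam hlam]
    have hdiv : (1 - σ) / ((n : ℝ) + 1) = ((n:ℝ)+1)⁻¹ - σ * ((n:ℝ)+1)⁻¹ := by
      field_simp
    rw [hdiv]
    have : 0 ≤ σ * lam k x := mul_nonneg hσ.le hx0
    have hexp : σ * (lam k x - ((n:ℝ)+1)⁻¹) = σ * lam k x - σ * ((n:ℝ)+1)⁻¹ := by ring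
    linarith [hexp]
  · intro h
    refine ⟨c + σ⁻¹ • (z - c), ?_, ?_⟩
    · rw [mem_simplexSet_iff v hv lam hlam]
      intro k
      rw [lam_homothet_pt v hv lam hlam]
      have hk := h k
      have hdiv : (1 - σ) / ((n : ℝ) + 1) = ((n:ℝ)+1)⁻¹ - σ * ((n:ℝ)+1)⁻¹ := by
        field_simp
      have h5 : -(σ * ((n:ℝ)+1)⁻¹) ≤ lam k z - ((n:ℝ)+1)⁻¹ := by
        rw [hdiv] at hk; linarith
      have h6 : σ⁻¹ * (-(σ * ((n:ℝ)+1)⁻¹)) ≤ σ⁻¹ * (lam k z - ((n:ℝ)+1)⁻¹) :=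
        mul_le_mul_of_nonneg_left h5 (inv_nonneg.mpr hσ.le)
      have h7 : σ⁻¹ * (-(σ * ((n:ℝ)+1)⁻¹)) = -((n:ℝ)+1)⁻¹ := by
        field_simp
      rw [h7] at h6
      linarith
    · show c + σ • (c + σ⁻¹ • (z - c) - c) = z
      have h8 : c + σ⁻¹ • (z - c) - c = σ⁻¹ • (z - c) := by abel
      rw [h8, smul_smul, mul_inv_cancel₀ hσ.ne', one_smul]
      abel

lemma cubeVertices_subset : cubeVertices n ⊆ unitCube n := by
  intro x hx i
  rcases hx i with h | h <;> rw [h] <;> constructor <;> norm_num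

lemma cubeVertices_finite : (cubeVertices n).Finite := by
  have h : cubeVertices n ⊆ WithLp.toLp 2 '' Set.pi Set.univ (fun _ : Fin n => ({0, 1} : Set ℝ)) := by
    intro x hx
    refine ⟨x.ofLp, fun i _ => ?_, rfl⟩
    rcases hx i with h | h <;> simp [h]
  exact ((Set.Finite.pi (fun _ => Set.toFinite _)).image _).subset h

lemma zero_mem_cubeVertices : (0 : EuclideanSpace ℝ (Fin n)) ∈ cubeVertices n :=
  fun _ => Or.inl rfl

/-- An affine functional attains its minimum over the cube at a vertex. -/
lemma exists_vertex_le (f : EuclideanSpace ℝ (Fin n) →ᵃ[ℝ] ℝ)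
    {x : EuclideanSpace ℝ (Fin n)} (hx : x ∈ unitCube n) :
    ∃ w ∈ cubeVertices n, f w ≤ f x := by
  classical
  set g : Fin n → ℝ := fun i => f.linear (EuclideanSpace.single i 1) with hg
  refine ⟨WithLp.toLp 2 (fun i => if g i ≤ 0 then 1 else 0 : Fin n → ℝ), ?_, ?_⟩
  · intro i
    by_cases h : g i ≤ 0 <;> simp [h]
  · have hterm : ∀ i : Fin n,
        (if g i ≤ 0 then (1:ℝ) else 0) * g i ≤ x i * g i := by
      intro i
      by_cases h : g i ≤ 0
      · simp only [if_pos h]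
        exact mul_le_mul_of_nonpos_right (hx i).2 h
      · simp only [if_neg h]
        rw [zero_mul]
        exact mul_nonneg (hx i).1 (le_of_not_ge h)
    have e1 : f (WithLp.toLp 2 (fun i => if g i ≤ 0 then (1:ℝ) else 0 : Fin n → ℝ) : EuclideanSpace ℝ (Fin n))
        = (∑ i, (if g i ≤ 0 then (1:ℝ) else 0) * g i) + f 0 := by
      rw [affine_decomp, lin_sum]
    have e2 : f x = (∑ i, x i * g i) + f 0 := by rw [affine_decomp, lin_sum]
    rw [e1, e2]
    have hsum := Finset.sum_le_sum (s := Finset.univ) (fun i _ => hterm i)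
    linarith

end VertexFaceAux
/-- Theorem 7.1: For `S ⊆ Q_n` with `Q_n ⊄ S`, a vertex `w` of `Q_n`
belongs to the `j`-th `(n−1)`-face of `ξ(S)S` (the face lying in the hyperplane
`λ_j(x) = (1−ξ(S))/(n+1)`) iff `−λ_j(w) = max_{k} max_{x ∈ ver Q_n}(−λ_k(x))`. -/
theorem vertex_on_face_iff_max (n : ℕ) (hn : 0 < n)
    (v : Fin (n + 1) → EuclideanSpace ℝ (Fin n)) (hv : AffineIndependent ℝ v)
    (hS : simplexSet v ⊆ unitCube n) (hns : ¬ unitCube n ⊆ simplexSet v)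
    (lam : Fin (n + 1) → (EuclideanSpace ℝ (Fin n) →ᵃ[ℝ] ℝ))
    (hlam : IsLagrangeBasis v lam)
    (w : EuclideanSpace ℝ (Fin n)) (hw : w ∈ cubeVertices n) (j : Fin (n + 1)) :
    (w ∈ simplexHomothet v (xiInd (unitCube n) v) ∧
        lam j w = (1 - xiInd (unitCube n) v) / ((n : ℝ) + 1)) ↔
      -(lam j w) =
        sSup {y : ℝ | ∃ k : Fin (n + 1), ∃ x ∈ cubeVertices n, y = -(lam k x)} := by
  classical
  set T : Set ℝ := {y : ℝ | ∃ k : Fin (n + 1), ∃ x ∈ cubeVertices n, y = -(lam k x)} with hT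
  have hTfin : T.Finite := by
    have he : T = ⋃ k : Fin (n+1), (fun x => -(lam k x)) '' cubeVertices n := by
      ext y
      simp only [hT, Set.mem_setOf_eq, Set.mem_iUnion, Set.mem_image]
      constructor
      · rintro ⟨k, x, hx, rfl⟩; exact ⟨k, x, hx, rfl⟩
      · rintro ⟨k, x, hx, rfl⟩; exact ⟨k, x, hx, rfl⟩
    rw [he]
    exact Set.finite_iUnion (fun k => VertexFaceAux.cubeVertices_finite.image _)
  have hTne : T.Nonempty := ⟨-(lam j 0), j, 0, VertexFaceAux.zero_mem_cubeVertices, rfl⟩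
  set M := sSup T with hM
  have hub : ∀ (k : Fin (n+1)) (x : EuclideanSpace ℝ (Fin n)),
      x ∈ cubeVertices n → -(lam k x) ≤ M :=
    fun k x hx => le_csSup hTfin.bddAbove ⟨k, x, hx, rfl⟩
  have hN : (0:ℝ) < (n:ℝ) + 1 := by positivity
  have hMpos : 0 < M := by
    rw [Set.not_subset] at hns
    obtain ⟨x, hxQ, hxS⟩ := hns
    rw [VertexFaceAux.mem_simplexSet_iff v hv lam hlam] at hxS
    push_neg at hxS
    obtain ⟨k, hk⟩ := hxS
    obtain ⟨wv, hwv, hle⟩ := VertexFaceAux.exists_vertex_le (lam k) hxQ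
    have := hub k wv hwv
    linarith
  have hxi : xiInd (unitCube n) v = 1 + ((n:ℝ)+1) * M := by
    have hset : {σ : ℝ | 1 ≤ σ ∧ unitCube n ⊆ simplexHomothet v σ}
        = Set.Ici (1 + ((n:ℝ)+1)*M) := by
      ext σ
      simp only [Set.mem_setOf_eq, Set.mem_Ici]
      constructor
      · rintro ⟨h1, h2⟩
        have hσ : (0:ℝ) < σ := lt_of_lt_of_le one_pos h1
        have key : M ≤ (σ - 1)/((n:ℝ)+1) := by
          apply csSup_le hTne
          rintro y ⟨k, x, hx, rfl⟩
          have hxQ := VertexFaceAux.cubeVertices_subset hx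
          have h4 := (VertexFaceAux.mem_homothet_iff v hv lam hlam hσ x).mp (h2 hxQ) k
          have h5 : -((1-σ)/((n:ℝ)+1)) = (σ-1)/((n:ℝ)+1) := by ring
          linarith
        rw [le_div_iff₀ hN] at key
        linarith
      · intro h
        have h1le : (1:ℝ) ≤ σ := le_trans (by nlinarith [mul_pos hN hMpos]) h
        have hσ : (0:ℝ) < σ := by linarith
        refine ⟨h1le, fun x hx => ?_⟩
        rw [VertexFaceAux.mem_homothet_iff v hv lam hlam hσ]
        intro k
        obtain ⟨wv, hwv, hle⟩ := VertexFaceAux.exists_vertex_le (lam k) hx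
        have h2 := hub k wv hwv
        have h3 : (1 - σ)/((n:ℝ)+1) ≤ -M := by
          rw [div_le_iff₀ hN]
          nlinarith
        linarith
    unfold xiInd
    rw [hset, csInf_Ici]
  have hξpos : 0 < xiInd (unitCube n) v := by rw [hxi]; nlinarith [mul_pos hN hMpos]
  have hval : (1 - xiInd (unitCube n) v) / ((n:ℝ)+1) = -M := by
    rw [hxi]; field_simp; ring
  rw [VertexFaceAux.mem_homothet_iff v hv lam hlam hξpos w, hval]
  constructor
  · rintro ⟨_, h2⟩
    rw [h2]
    ring
  · intro h
    have hj : lam j w = -M := by linarith [h.symm.le, h.le]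
    exact ⟨fun k => by linarith [hub k w hw], hj⟩
end

section
/- Let M be a nondegenerate n×n matrix with entries in {0,1}, and let A be the (n+1)×(n+1) matrix obtained from M by adding the (n+1)-th row (0,0,…,0,1) and the (n+1)-th column consisting entirely of 1's. Write A^{-1} = (l_{ij}). Then: (i) for each i = 1,…,n, Σ_{j=1}^{n+1} |l_{ij}| ≥ 2; (ii) if |det M| = h_n, then Σ_{j=1}^{n+1} |l_{ij}| = 2 for all i = 1,…,n; (iii) if Σ_{j=1}^{n+1} |l_{ij}| > 2 for some i, then |det M| < h_n. -/
open Set MeasureTheory Finset Metric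

lemma maxDet01_bddAbove (n : ℕ) : BddAbove {d : ℝ | ∃ M : Matrix (Fin n) (Fin n) ℝ,
    (∀ i j, M i j = 0 ∨ M i j = 1) ∧ d = M.det} := by
  refine ⟨(n.factorial : ℝ), ?_⟩
  rintro d ⟨N, hN, rfl⟩
  have h1 : ∀ i j, |N i j| ≤ (1 : ℝ) := by
    intro i j; rcases hN i j with h | h <;> simp [h]
  have h2 := Matrix.det_le (abv := (AbsoluteValue.abs : AbsoluteValue ℝ ℝ)) h1
  simp only [Fintype.card_fin, one_pow, nsmul_eq_mul, mul_one] at h2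
  calc N.det ≤ |N.det| := le_abs_self _
    _ ≤ _ := h2

lemma abs_det_le_maxDet01 (n : ℕ) (M : Matrix (Fin n) (Fin n) ℝ)
    (hM : ∀ i j, M i j = 0 ∨ M i j = 1) : |M.det| ≤ maxDet01 n := by
  rcases le_or_gt 0 M.det with h | h
  · rw [abs_of_nonneg h]
    exact le_csSup (maxDet01_bddAbove n) ⟨M, hM, rfl⟩
  · have h2 : 2 ≤ n := by
      by_contra hcon
      push_neg at hcon
      interval_cases n
      · rw [Matrix.det_isEmpty] at h; linarith
      · rw [Matrix.det_fin_one] at h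
        rcases hM 0 0 with h0 | h0 <;> rw [h0] at h <;> norm_num at h
    have hne : (⟨0, by omega⟩ : Fin n) ≠ ⟨1, by omega⟩ := by
      intro hc
      have := congrArg Fin.val hc
      simp at this
    set σ : Equiv.Perm (Fin n) := Equiv.swap ⟨0, by omega⟩ ⟨1, by omega⟩ with hσ
    have hdet' : (M.submatrix σ id).det = -M.det := by
      rw [Matrix.det_permute, hσ, Equiv.Perm.sign_swap hne]
      simp
    rw [abs_of_neg h]
    exact le_csSup (maxDet01_bddAbove n) ⟨M.submatrix σ id, fun i j => hM _ _, hdet'.symm⟩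

lemma det_updateColumn_key (n : ℕ) (M : Matrix (Fin n) (Fin n) ℝ) (hdet : M.det ≠ 0)
    (i : Fin n) (t : Fin n → ℝ) :
    (M.updateCol i (fun j => M j i + t j)).det = M.det * (1 + ∑ j, t j * M⁻¹ i j) := by
  have h1 : (fun j => M j i + t j) = (fun j => M j i) + t := rfl
  rw [h1, Matrix.det_updateCol_add, Matrix.updateCol_eq_self]
  have h2 : (M.updateCol i t).det = Matrix.cramer M t i := (Matrix.cramer_apply _ _ _).symm
  have hadj : ∀ j, M.adjugate i j = M.det * M⁻¹ i j := by
    intro j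
    rw [Matrix.inv_def, Ring.inverse_eq_inv']
    simp only [Matrix.smul_apply, smul_eq_mul]
    field_simp
  rw [h2, Matrix.cramer_eq_adjugate_mulVec]
  have h3 : M.adjugate.mulVec t i = ∑ j, M.det * M⁻¹ i j * t j := by
    simp only [Matrix.mulVec, dotProduct]
    exact Finset.sum_congr rfl fun j _ => by rw [hadj]
  rw [h3, mul_add, mul_one, Finset.mul_sum]
  congr 1
  exact Finset.sum_congr rfl fun j _ => by ring

/-- Theorem 9.1: Let `M` be a nondegenerate `(0,1)`-matrix of order `n`,
`A` the `(n+1)×(n+1)` matrix obtained by appending the row `(0,…,0,1)` and a column of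
`1`'s, and `A⁻¹ = (l_{ij})`. Then (i) `Σ_j |l_{ij}| ≥ 2` for `i ≤ n`;
(ii) if `|det M| = h_n` then `Σ_j |l_{ij}| = 2` for all `i ≤ n`;
(iii) if `Σ_j |l_{ij}| > 2` for some `i ≤ n` then `|det M| < h_n`. -/
theorem maxDet01_row_sums (n : ℕ) (hn : 0 < n) (M : Matrix (Fin n) (Fin n) ℝ)
    (hM : ∀ i j, M i j = 0 ∨ M i j = 1) (hdet : M.det ≠ 0)
    (A : Matrix (Fin (n + 1)) (Fin (n + 1)) ℝ)
    (hA : A = Matrix.of fun i j : Fin (n + 1) =>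
      if hi : (i : ℕ) < n then
        (if hj : (j : ℕ) < n then M ⟨i, hi⟩ ⟨j, hj⟩ else 1)
      else (if (j : ℕ) < n then 0 else 1)) :
    (∀ i : Fin n, 2 ≤ ∑ j : Fin (n + 1), |A⁻¹ i.castSucc j|) ∧
    (|M.det| = maxDet01 n → ∀ i : Fin n, ∑ j : Fin (n + 1), |A⁻¹ i.castSucc j| = 2) ∧
    ((∃ i : Fin n, 2 < ∑ j : Fin (n + 1), |A⁻¹ i.castSucc j|) → |M.det| < maxDet01 n) := by
  classical
  have hU : IsUnit M.det := isUnit_iff_ne_zero.mpr hdet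
  have hMinv : M * M⁻¹ = 1 := Matrix.mul_nonsing_inv M hU
  have hinvM : M⁻¹ * M = 1 := Matrix.nonsing_inv_mul M hU
  set B : Matrix (Fin (n + 1)) (Fin (n + 1)) ℝ := Matrix.of fun i j : Fin (n + 1) =>
    if hi : (i : ℕ) < n then
      (if hj : (j : ℕ) < n then M⁻¹ ⟨i, hi⟩ ⟨j, hj⟩ else -∑ k, M⁻¹ ⟨i, hi⟩ k)
    else (if (j : ℕ) < n then 0 else 1) with hBdef
  have hA1 : ∀ i₀ k : Fin n, A i₀.castSucc k.castSucc = M i₀ k := by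
    intro i₀ k; rw [hA]; simp [Fin.is_lt, Fin.eta]
  have hA2 : ∀ i₀ : Fin n, A i₀.castSucc (Fin.last n) = 1 := by
    intro i₀; rw [hA]; simp [Fin.is_lt]
  have hA3 : ∀ k : Fin (n + 1), A (Fin.last n) k = if (k : ℕ) < n then 0 else 1 := by
    intro k; rw [hA]; simp
  have hB1 : ∀ i₀ k : Fin n, B i₀.castSucc k.castSucc = M⁻¹ i₀ k := by
    intro i₀ k; rw [hBdef]; simp [Fin.is_lt, Fin.eta]
  have hB2 : ∀ i₀ : Fin n, B i₀.castSucc (Fin.last n) = -∑ k, M⁻¹ i₀ k := by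
    intro i₀; rw [hBdef]; simp [Fin.is_lt, Fin.eta]
  have hB3 : ∀ k : Fin (n + 1), B (Fin.last n) k = if (k : ℕ) < n then 0 else 1 := by
    intro k; rw [hBdef]; simp
  have hAB : A * B = 1 := by
    ext i j
    rw [Matrix.mul_apply, Fin.sum_univ_castSucc]
    induction i using Fin.lastCases with
    | last =>
      have hz : ∀ k : Fin n, A (Fin.last n) k.castSucc * B k.castSucc j = 0 := by
        intro k; rw [hA3]; simp [Fin.is_lt]
      rw [Finset.sum_eq_zero fun k _ => hz k, hA3, hB3]
      simp only [Fin.val_last, lt_self_iff_false, if_false, zero_add, one_mul]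
      induction j using Fin.lastCases with
      | last => simp [Matrix.one_apply]
      | cast j₀ => simp [Matrix.one_apply, Fin.is_lt, ((Fin.castSucc_lt_last j₀).ne).symm]
    | cast i₀ =>
      induction j using Fin.lastCases with
      | last =>
        have h1 : ∑ k : Fin n, A i₀.castSucc k.castSucc * B k.castSucc (Fin.last n)
            = -∑ k : Fin n, ∑ m : Fin n, M i₀ k * M⁻¹ k m := by
          rw [← Finset.sum_neg_distrib]
          exact Finset.sum_congr rfl fun k _ => by rw [hA1, hB2, mul_neg, Finset.mul_sum]
        have h0 : ∑ k : Fin n, ∑ m : Fin n, M i₀ k * M⁻¹ k m = (1 : ℝ) := by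
          rw [Finset.sum_comm]
          have hh : ∀ m : Fin n, ∑ k : Fin n, M i₀ k * M⁻¹ k m
              = (1 : Matrix (Fin n) (Fin n) ℝ) i₀ m := by
            intro m; rw [← Matrix.mul_apply, hMinv]
          rw [Finset.sum_congr rfl fun m _ => hh m]
          rw [Finset.sum_eq_single i₀ (fun b _ hb => Matrix.one_apply_ne' hb) (by simp), Matrix.one_apply_eq]
        have hBll : B (Fin.last n) (Fin.last n) = 1 := by rw [hB3]; simp
        rw [h1, h0, hA2, hBll]
        simp [Matrix.one_apply, (Fin.castSucc_lt_last i₀).ne]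
      | cast j₀ =>
        have h1 : ∑ k : Fin n, A i₀.castSucc k.castSucc * B k.castSucc j₀.castSucc
            = (M * M⁻¹) i₀ j₀ := by
          rw [Matrix.mul_apply]
          exact Finset.sum_congr rfl fun k _ => by rw [hA1, hB1]
        have hBl : B (Fin.last n) j₀.castSucc = 0 := by rw [hB3]; simp [Fin.is_lt]
        rw [h1, hA2, hBl, hMinv]
        simp [Matrix.one_apply, Fin.castSucc_inj]
  have hAinv : A⁻¹ = B := Matrix.inv_eq_right_inv hAB
  have hrow : ∀ i : Fin n, ∑ j : Fin (n + 1), |A⁻¹ i.castSucc j|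
      = (∑ j, |M⁻¹ i j|) + |∑ j, M⁻¹ i j| := by
    intro i
    rw [hAinv, Fin.sum_univ_castSucc, hB2, abs_neg]
    congr 1
    exact Finset.sum_congr rfl fun j _ => by rw [hB1]
  have hdiag : ∀ i : Fin n, ∑ j, M⁻¹ i j * M j i = 1 := by
    intro i; rw [← Matrix.mul_apply, hinvM, Matrix.one_apply_eq]
  have part1 : ∀ i : Fin n, 2 ≤ ∑ j : Fin (n + 1), |A⁻¹ i.castSucc j| := by
    intro i
    rw [hrow i]
    have h1 : ∀ j, 2 * (M⁻¹ i j * M j i) ≤ |M⁻¹ i j| + M⁻¹ i j := by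
      intro j
      rcases hM j i with h | h
      · rw [h, mul_zero, mul_zero]; linarith [neg_abs_le (M⁻¹ i j)]
      · rw [h, mul_one]; linarith [le_abs_self (M⁻¹ i j)]
    have h2 : 2 ≤ (∑ j, |M⁻¹ i j|) + ∑ j, M⁻¹ i j := by
      have h3 := Finset.sum_le_sum (fun j (_ : j ∈ Finset.univ) => h1 j)
      rw [← Finset.mul_sum, hdiag i, mul_one, Finset.sum_add_distrib] at h3
      linarith
    linarith [le_abs_self (∑ j, M⁻¹ i j)]
  have part2 : |M.det| = maxDet01 n → ∀ i : Fin n,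
      ∑ j : Fin (n + 1), |A⁻¹ i.castSucc j| = 2 := by
    intro habs i
    have key : ∀ t : Fin n → ℝ, (∀ j, M j i + t j = 0 ∨ M j i + t j = 1) →
        |1 + ∑ j, t j * M⁻¹ i j| ≤ 1 := by
      intro t ht
      have h01 : ∀ a b, (M.updateCol i fun j => M j i + t j) a b = 0 ∨
          (M.updateCol i fun j => M j i + t j) a b = 1 := by
        intro a b
        simp only [Matrix.updateCol_apply]
        split_ifs with hb
        · subst hb; exact ht a
        · exact hM a b
      have hdle := abs_det_le_maxDet01 n _ h01
      rw [det_updateColumn_key n M hdet i t, abs_mul, ← habs] at hdle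
      exact (mul_le_iff_le_one_right (abs_pos.mpr hdet)).mp hdle
    have facta : ∀ j, 0 < M⁻¹ i j → M j i = 1 := by
      have hka := key (fun j => if 0 < M⁻¹ i j then 1 - M j i else 0) (by
        intro j; beta_reduce
        split_ifs with h
        · right; ring
        · rcases hM j i with h0 | h0 <;> simp [h0])
      have hterm : ∀ j ∈ Finset.univ,
          (0:ℝ) ≤ (if 0 < M⁻¹ i j then 1 - M j i else 0) * M⁻¹ i j := by
        intro j _
        split_ifs with h
        · have hle : M j i ≤ 1 := by rcases hM j i with h0 | h0 <;> simp [h0]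
          exact mul_nonneg (by linarith) h.le
        · simp
      have hc0 : (0:ℝ) ≤ ∑ j, (if 0 < M⁻¹ i j then 1 - M j i else 0) * M⁻¹ i j :=
        Finset.sum_nonneg hterm
      have hceq : ∑ j, (if 0 < M⁻¹ i j then 1 - M j i else 0) * M⁻¹ i j = 0 := by
        have := (abs_le.mp hka).2
        linarith
      intro j hj
      have hjz := (Finset.sum_eq_zero_iff_of_nonneg hterm).mp hceq j (Finset.mem_univ j)
      rw [if_pos hj] at hjz
      rcases mul_eq_zero.mp hjz with h | h
      · linarith
      · exact absurd h hj.ne'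
    have factb : ∀ j, M⁻¹ i j < 0 → M j i = 0 := by
      have hkb := key (fun j => if M⁻¹ i j < 0 then -M j i else 0) (by
        intro j; beta_reduce
        split_ifs with h
        · left; ring
        · rcases hM j i with h0 | h0 <;> simp [h0])
      have hterm : ∀ j ∈ Finset.univ,
          (0:ℝ) ≤ (if M⁻¹ i j < 0 then -M j i else 0) * M⁻¹ i j := by
        intro j _
        split_ifs with h
        · have h0 : (0:ℝ) ≤ M j i := by rcases hM j i with h0 | h0 <;> simp [h0]
          nlinarith
        · simp
      have hc0 : (0:ℝ) ≤ ∑ j, (if M⁻¹ i j < 0 then -M j i else 0) * M⁻¹ i j :=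
        Finset.sum_nonneg hterm
      have hceq : ∑ j, (if M⁻¹ i j < 0 then -M j i else 0) * M⁻¹ i j = 0 := by
        have := (abs_le.mp hkb).2
        linarith
      intro j hj
      have hjz := (Finset.sum_eq_zero_iff_of_nonneg hterm).mp hceq j (Finset.mem_univ j)
      rw [if_pos hj] at hjz
      have hjz' : M j i * M⁻¹ i j = 0 := by linarith [hjz]
      rcases mul_eq_zero.mp hjz' with h | h
      · exact h
      · exact absurd h hj.ne
    have factd : ∑ j, |M⁻¹ i j| ≤ 2 := by
      have hkd := key (fun j => if 0 < M⁻¹ i j then -1 else if M⁻¹ i j < 0 then 1 else 0) (by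
        intro j; beta_reduce
        split_ifs with h h'
        · left; rw [facta j h]; ring
        · right; rw [factb j h']; ring
        · rcases hM j i with h0 | h0 <;> simp [h0])
      have hsum : ∑ j, (if 0 < M⁻¹ i j then (-1:ℝ) else if M⁻¹ i j < 0 then 1 else 0) * M⁻¹ i j
          = -∑ j, |M⁻¹ i j| := by
        rw [← Finset.sum_neg_distrib]
        refine Finset.sum_congr rfl fun j _ => ?_
        split_ifs with h h'
        · rw [abs_of_pos h]; ring
        · rw [abs_of_neg h']; ring
        · have h0 : M⁻¹ i j = 0 := le_antisymm (not_lt.mp h) (not_lt.mp h')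
          rw [h0]; simp
      rw [hsum] at hkd
      have := (abs_le.mp hkd).1
      linarith
    have factP : ∑ j, (|M⁻¹ i j| + M⁻¹ i j) = 2 := by
      have hterm : ∀ j, |M⁻¹ i j| + M⁻¹ i j = 2 * (M⁻¹ i j * M j i) := by
        intro j
        rcases hM j i with h0 | h0
        · rw [h0, mul_zero, mul_zero]
          have hle : M⁻¹ i j ≤ 0 := by
            by_contra hc
            push_neg at hc
            rw [facta j hc] at h0
            norm_num at h0
          rw [abs_of_nonpos hle]; ring
        · rw [h0, mul_one]
          have hge : 0 ≤ M⁻¹ i j := by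
            by_contra hc
            push_neg at hc
            rw [factb j hc] at h0
            norm_num at h0
          rw [abs_of_nonneg hge]; ring
      rw [Finset.sum_congr rfl fun j _ => hterm j, ← Finset.mul_sum, hdiag i]
      norm_num
    rw [hrow i]
    rw [Finset.sum_add_distrib] at factP
    have h2 : ∑ j, M⁻¹ i j = 2 - ∑ j, |M⁻¹ i j| := by linarith
    rw [h2, abs_of_nonneg (by linarith)]
    ring
  refine ⟨part1, part2, ?_⟩
  rintro ⟨i, hi⟩
  rcases (abs_det_le_maxDet01 n M hM).lt_or_eq with h | h
  · exact h
  · rw [part2 h i] at hi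
    norm_num at hi
end

section
/- If S is a nondegenerate n-dimensional simplex contained in the closed unit Euclidean ball B_n, then α(B_n;S) ≥ n, and equality α(B_n;S) = n holds if and only if S is a regular simplex inscribed into B_n (all edges of S have equal length and all vertices of S lie on the unit sphere). -/
open Set MeasureTheory Finset Metric
open scoped RealInnerProductSpace

set_option maxHeartbeats 1000000 in
/-- Theorem 10.2: If `S ⊆ B_n` is a nondegenerate simplex, then
`α(B_n;S) ≥ n`, with equality iff `S` is a regular simplex inscribed into `B_n`. -/
theorem alpha_ball_ge_dim (n : ℕ) (hn : 0 < n)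
    (v : Fin (n + 1) → EuclideanSpace ℝ (Fin n)) (hv : AffineIndependent ℝ v)
    (hsub : simplexSet v ⊆ unitBall n) :
    (n : ℝ) ≤ alphaInd (unitBall n) v ∧
    (alphaInd (unitBall n) v = n ↔
      (∃ e : ℝ, ∀ j k, j ≠ k → dist (v j) (v k) = e) ∧ ∀ j, ‖v j‖ = 1) := by
  classical
  have hcard : Fintype.card (Fin (n+1)) = Module.finrank ℝ (EuclideanSpace ℝ (Fin n)) + 1 := by
    simp [finrank_euclideanSpace_fin]
  have htot : affineSpan ℝ (Set.range v) = ⊤ :=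
    hv.affineSpan_eq_top_iff_card_eq_finrank_add_one.mpr hcard
  let b : AffineBasis (Fin (n+1)) ℝ (EuclideanSpace ℝ (Fin n)) := ⟨v, hv, htot⟩
  have hb : ⇑b = v := rfl
  obtain ⟨g, hg⟩ : ∃ g : Fin (n+1) → EuclideanSpace ℝ (Fin n),
      ∀ (j : Fin (n+1)) (x : EuclideanSpace ℝ (Fin n)), ⟪g j, x⟫ = (b.coord j).linear x :=
    ⟨fun j => (InnerProductSpace.toDual ℝ (EuclideanSpace ℝ (Fin n))).symm
      (LinearMap.toContinuousLinearMap (b.coord j).linear),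
     fun j x => by simp [InnerProductSpace.toDual_symm_apply]⟩
  have hcadd : ∀ (j : Fin (n+1)) (p u : EuclideanSpace ℝ (Fin n)),
      b.coord j (p + u) = b.coord j p + ⟪g j, u⟫ := by
    intro j p u
    have h1 : p + u = u +ᵥ p := by rw [vadd_eq_add, add_comm]
    rw [h1, AffineMap.map_vadd, hg, vadd_eq_add, add_comm]
  have hpos : ∀ s ∈ simplexSet v, ∀ j, 0 ≤ b.coord j s := by
    intro s hs j
    have hs' : s ∈ convexHull ℝ (Set.range v) := hs
    rw [← hb, b.convexHull_eq_nonneg_coord] at hs'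
    exact hs' j
  have hvnorm : ∀ j, ‖v j‖ ≤ 1 := by
    intro j
    have h1 : v j ∈ simplexSet v := subset_convexHull ℝ _ (Set.mem_range_self j)
    have h2 := hsub h1
    simpa [unitBall, mem_closedBall_zero_iff] using h2
  have hcoordj : ∀ j, b.coord j (v j) = 1 := by
    intro j; rw [← hb]; exact b.coord_apply_eq j
  have hcoordne : ∀ j k, j ≠ k → b.coord j (v k) = 0 := by
    intro j k hjk; rw [← hb]; exact b.coord_apply_ne hjk
  have hgv : ∀ j, ⟪g j, v j⟫ = 1 - b.coord j 0 := by
    intro j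
    have h2 := hcadd j 0 (v j)
    rw [zero_add, hcoordj j] at h2
    linarith
  have hsumgv : ∑ j, ⟪g j, v j⟫ = (n : ℝ) := by
    have h0 : ∑ j, b.coord j (0 : EuclideanSpace ℝ (Fin n)) = 1 := b.sum_coord_apply_eq_one 0
    have h1 : ∑ j, ⟪g j, v j⟫ = ∑ j : Fin (n+1), (1 - b.coord j 0) :=
      Finset.sum_congr rfl (fun j _ => hgv j)
    rw [h1, Finset.sum_sub_distrib, h0, Finset.sum_const, Finset.card_univ, Fintype.card_fin]
    push_cast; ring
  have hinle : ∀ j, ⟪g j, v j⟫ ≤ ‖g j‖ := by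
    intro j
    calc ⟪g j, v j⟫ ≤ ‖g j‖ * ‖v j‖ := real_inner_le_norm _ _
    _ ≤ ‖g j‖ * 1 := by nlinarith [norm_nonneg (g j), hvnorm j, norm_nonneg (v j)]
    _ = ‖g j‖ := mul_one _
  have hnleG : (n:ℝ) ≤ ∑ j, ‖g j‖ := by
    rw [← hsumgv]; exact Finset.sum_le_sum fun j _ => hinle j
  set c := simplexCentroid v with hc
  -- key upper bound on admissible σ
  have hkey : ∀ σ : ℝ, 0 < σ → ∀ t : EuclideanSpace ℝ (Fin n),
      unitBall n ⊆ (fun x => t + x) '' simplexHomothet v σ → ∑ j, ‖g j‖ ≤ σ := by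
    intro σ hσ t hsub'
    have claim0 : ∀ x : EuclideanSpace ℝ (Fin n), ‖x‖ ≤ 1 →
        ∀ j, 0 ≤ b.coord j (c + σ⁻¹ • (x - (t + c))) := by
      intro x hx j
      have hx' : x ∈ unitBall n := by
        simpa [unitBall, mem_closedBall_zero_iff] using hx
      obtain ⟨y, hy, hxy⟩ := hsub' hx'
      have hy' : y ∈ (fun s => c + σ • (s - c)) '' simplexSet v := hy
      obtain ⟨s, hs, hsy⟩ := hy'
      have hxs : c + σ⁻¹ • (x - (t + c)) = s := by
        rw [← hxy, ← hsy]
        have h1 : t + (c + σ • (s - c)) - (t + c) = σ • (s - c) := by abel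
        rw [h1, smul_smul, inv_mul_cancel₀ hσ.ne', one_smul]
        abel
      rw [hxs]; exact hpos s hs j
    set p₀ := c + σ⁻¹ • ((0 : EuclideanSpace ℝ (Fin n)) - (t + c)) with hp₀
    have claim1 : ∀ j, σ⁻¹ * ‖g j‖ ≤ b.coord j p₀ := by
      intro j
      by_cases hgj : g j = 0
      · have h0 := claim0 0 (by simp) j
        rw [hgj, norm_zero, mul_zero]
        exact h0
      · set x : EuclideanSpace ℝ (Fin n) := -(‖g j‖⁻¹ • g j) with hx
        have hxnorm : ‖x‖ ≤ 1 := by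
          rw [hx, norm_neg, norm_smul, norm_inv, norm_norm,
            inv_mul_cancel₀ (norm_ne_zero_iff.2 hgj)]
        have h0 := claim0 x hxnorm j
        have hre : c + σ⁻¹ • (x - (t + c)) = p₀ + σ⁻¹ • x := by
          rw [hp₀]; module
        rw [hre, hcadd j p₀ (σ⁻¹ • x)] at h0
        have hi : ⟪g j, σ⁻¹ • x⟫ = -(σ⁻¹ * ‖g j‖) := by
          rw [real_inner_smul_right, hx, inner_neg_right, real_inner_smul_right,
            real_inner_self_eq_norm_mul_norm, ← mul_assoc,
            inv_mul_cancel₀ (norm_ne_zero_iff.2 hgj), one_mul]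
          ring
        rw [hi] at h0; linarith
    have hsum1 : ∑ j, b.coord j p₀ = 1 := b.sum_coord_apply_eq_one p₀
    have h2 : σ⁻¹ * ∑ j, ‖g j‖ ≤ 1 := by
      rw [Finset.mul_sum, ← hsum1]
      exact Finset.sum_le_sum fun j _ => claim1 j
    nlinarith [mul_inv_cancel₀ hσ.ne']
  -- nonemptiness of the admissible set
  have hne : ∃ σ : ℝ, 0 < σ ∧ ∃ t, unitBall n ⊆ (fun x => t + x) '' simplexHomothet v σ := by
    set K := (∑ j, ‖g j‖) + 1 with hK
    have hKpos : 0 < K := by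
      rw [hK]
      have h0 := Finset.sum_nonneg (fun j (_ : j ∈ Finset.univ) => norm_nonneg (g j))
      linarith
    set σ₀ := ((n:ℝ)+1) * K with hσ₀def
    have hσ₀pos : 0 < σ₀ := by
      rw [hσ₀def]
      exact mul_pos (by positivity) hKpos
    refine ⟨σ₀, hσ₀pos, -c, ?_⟩
    intro x hx
    have hxn : ‖x‖ ≤ 1 := by simpa [unitBall, mem_closedBall_zero_iff] using hx
    set s := c + σ₀⁻¹ • x with hs
    have hcc : ∀ j, b.coord j c = ((n:ℝ)+1)⁻¹ := by
      intro j
      have h1 : c = Finset.univ.centroid ℝ ⇑b := by rw [hb]; rfl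
      rw [h1, b.coord_apply_centroid (Finset.mem_univ j), Finset.card_univ, Fintype.card_fin]
      push_cast; ring
    have hsS : s ∈ simplexSet v := by
      have hnn : ∀ j, 0 ≤ b.coord j s := by
        intro j
        rw [hs, hcadd j c _, hcc j, real_inner_smul_right]
        have h1 : |⟪g j, x⟫| ≤ ‖g j‖ := by
          calc |⟪g j, x⟫| ≤ ‖g j‖ * ‖x‖ := abs_real_inner_le_norm _ _
          _ ≤ ‖g j‖ * 1 := by nlinarith [norm_nonneg (g j)]
          _ = ‖g j‖ := mul_one _
        have h2 : ‖g j‖ ≤ K := by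
          rw [hK]
          have h3 := Finset.single_le_sum (f := fun j => ‖g j‖)
            (fun i _ => norm_nonneg _) (Finset.mem_univ j)
          linarith
        have h3 : σ₀⁻¹ * K = ((n:ℝ)+1)⁻¹ := by
          rw [hσ₀def, mul_inv, mul_assoc, inv_mul_cancel₀ hKpos.ne', mul_one]
        have hσinv : 0 ≤ σ₀⁻¹ := inv_nonneg.2 hσ₀pos.le
        have h4 := abs_le.1 h1
        nlinarith [h4.1, h4.2]
      show s ∈ convexHull ℝ (Set.range v)
      rw [← hb, b.convexHull_eq_nonneg_coord]
      exact hnn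
    refine ⟨c + σ₀ • (s - c), ⟨s, hsS, rfl⟩, ?_⟩
    show -c + (c + σ₀ • (s - c)) = x
    rw [hs]
    have h5 : c + σ₀⁻¹ • x - c = σ₀⁻¹ • x := by abel
    rw [h5, smul_smul, mul_inv_cancel₀ hσ₀pos.ne', one_smul]
    abel
  set A := {σ : ℝ | 0 < σ ∧ ∃ t, unitBall n ⊆ (fun x => t + x) '' simplexHomothet v σ} with hA
  have hAne : A.Nonempty := by
    obtain ⟨σ, h1, h2⟩ := hne; exact ⟨σ, h1, h2⟩
  have halpha : alphaInd (unitBall n) v = sInf A := rfl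
  have hGle : ∑ j, ‖g j‖ ≤ sInf A := by
    refine le_csInf hAne ?_
    rintro σ ⟨h1, t, h2⟩
    exact hkey σ h1 t h2
  have hge : (n:ℝ) ≤ sInf A := le_trans hnleG hGle
  refine ⟨by rw [halpha]; exact hge, ?_, ?_⟩
  · -- equality implies regular inscribed
    intro heq
    rw [halpha] at heq
    have hGn : ∑ j, ‖g j‖ ≤ (n:ℝ) := heq ▸ hGle
    have hsum_eq : ∑ j, ⟪g j, v j⟫ = ∑ j, ‖g j‖ := by
      rw [hsumgv]; linarith
    have heach : ∀ j, ⟪g j, v j⟫ = ‖g j‖ := by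
      have h1 := (Finset.sum_eq_sum_iff_of_le (fun j _ => hinle j)).1 hsum_eq
      intro j; exact h1 j (Finset.mem_univ j)
    haveI : Nontrivial (Fin (n+1)) := Fin.nontrivial_iff_two_le.mpr (by omega)
    have hgj0 : ∀ j, g j ≠ 0 := by
      intro j h0
      obtain ⟨k, hk⟩ := exists_ne j
      have h3 := hcadd j (v k) (v j - v k)
      rw [add_sub_cancel, hcoordj j, hcoordne j k (Ne.symm hk), h0, inner_zero_left] at h3
      norm_num at h3
    have hnorm1 : ∀ j, ‖v j‖ = 1 := by
      intro j
      by_contra h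
      have hlt : ‖v j‖ < 1 := lt_of_le_of_ne (hvnorm j) h
      have h1 : ⟪g j, v j⟫ ≤ ‖g j‖ * ‖v j‖ := real_inner_le_norm _ _
      have hgn : 0 < ‖g j‖ := norm_pos_iff.2 (hgj0 j)
      nlinarith [heach j]
    have hpar : ∀ j, g j = ‖g j‖ • v j := by
      intro j
      have h1 : ⟪g j, v j⟫ = ‖g j‖ * ‖v j‖ := by rw [heach j, hnorm1 j, mul_one]
      have h2 := inner_eq_norm_mul_iff_real.1 h1
      rwa [hnorm1 j, one_smul] at h2
    have hinner : ∀ j k, j ≠ k → ⟪v j, v k⟫ = -(b.coord j 0) / ‖g j‖ := by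
      intro j k hjk
      have h3 := hcadd j 0 (v k)
      rw [zero_add, hcoordne j k hjk] at h3
      have h4 : ⟪g j, v k⟫ = ‖g j‖ * ⟪v j, v k⟫ := by
        conv_lhs => rw [hpar j]
        exact real_inner_smul_left _ _ _
      have h5 : ‖g j‖ ≠ 0 := norm_ne_zero_iff.2 (hgj0 j)
      rw [eq_div_iff h5]
      linear_combination -h4 - h3
    have hc0 : ∀ j k, j ≠ k → ⟪v j, v k⟫ = -(b.coord 0 0) / ‖g 0‖ := by
      intro j k hjk
      by_cases hj : j = 0
      · subst hj; exact hinner 0 k hjk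
      · have h1 : ⟪v j, v k⟫ = -(b.coord j 0) / ‖g j‖ := hinner j k hjk
        have h2 : ⟪v j, v 0⟫ = -(b.coord j 0) / ‖g j‖ := hinner j 0 hj
        have h3 : ⟪v 0, v j⟫ = -(b.coord 0 0) / ‖g 0‖ := hinner 0 j (Ne.symm hj)
        rw [h1, ← h2, real_inner_comm, h3]
    refine ⟨⟨Real.sqrt (2 - 2 * (-(b.coord 0 0) / ‖g 0‖)), ?_⟩, hnorm1⟩
    intro j k hjk
    have hd : dist (v j) (v k)^2 = 2 - 2 * (-(b.coord 0 0) / ‖g 0‖) := by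
      rw [dist_eq_norm, norm_sub_sq_real, hnorm1 j, hnorm1 k, hc0 j k hjk]; ring
    have h6 : dist (v j) (v k) = Real.sqrt (dist (v j) (v k)^2) :=
      (Real.sqrt_sq dist_nonneg).symm
    rw [h6, hd]
  · -- regular inscribed implies equality
    rintro ⟨⟨e, he⟩, hnorm⟩
    have hnR : (0:ℝ) < n := by exact_mod_cast hn
    have h2κ : ∀ j k, j ≠ k → ⟪v j, v k⟫ = 1 - e^2/2 := by
      intro j k hjk
      have hd := he j k hjk
      rw [dist_eq_norm] at hd
      have h1 : ‖v j - v k‖^2 = 2 - 2*⟪v j, v k⟫ := by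
        rw [norm_sub_sq_real, hnorm j, hnorm k]; ring
      rw [hd] at h1; linarith
    obtain ⟨κ, hκdef⟩ : ∃ κ : ℝ, κ = 1 - e^2/2 := ⟨_, rfl⟩
    rw [← hκdef] at h2κ
    haveI : Nontrivial (Fin (n+1)) := Fin.nontrivial_iff_two_le.mpr (by omega)
    have hinj := hv.injective
    have hκ1 : κ < 1 := by
      obtain ⟨j, k, hjk⟩ := exists_pair_ne (Fin (n+1))
      have hvjk : v j ≠ v k := fun h => hjk (hinj h)
      have h1 : (0:ℝ) < ‖v j - v k‖^2 := by
        have h2 : v j - v k ≠ 0 := sub_ne_zero.2 hvjk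
        exact pow_pos (norm_pos_iff.mpr h2) 2
      have h3 : ‖v j - v k‖^2 = 2 - 2*κ := by
        rw [norm_sub_sq_real, hnorm j, hnorm k, h2κ j k hjk]; ring
      linarith
    have hnli : ¬ LinearIndependent ℝ v := by
      intro hli
      have h1 := hli.fintype_card_le_finrank
      rw [Fintype.card_fin, finrank_euclideanSpace_fin] at h1
      omega
    obtain ⟨w, hw0, i, hwi⟩ := Fintype.not_linearIndependent_iff.1 hnli
    have hvv : ∀ k, ⟪v k, v k⟫ = 1 := by
      intro k; rw [real_inner_self_eq_norm_mul_norm, hnorm k, mul_one]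
    have hwk : ∀ k, w k * (1 - κ) = -κ * ∑ j, w j := by
      intro k
      have h1 : ⟪∑ j, w j • v j, v k⟫ = 0 := by rw [hw0, inner_zero_left]
      rw [sum_inner] at h1
      simp_rw [real_inner_smul_left] at h1
      rw [← Finset.add_sum_erase _ _ (Finset.mem_univ k)] at h1
      have h3 : ∑ j ∈ Finset.univ.erase k, w j * ⟪v j, v k⟫
          = κ * ∑ j ∈ Finset.univ.erase k, w j := by
        rw [Finset.mul_sum]
        refine Finset.sum_congr rfl ?_
        intro j hj
        rw [h2κ j k (Finset.ne_of_mem_erase hj)]; ring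
      have h5 : ∑ j ∈ Finset.univ.erase k, w j = (∑ j, w j) - w k := by
        have := Finset.add_sum_erase Finset.univ w (Finset.mem_univ k)
        linarith
      rw [h3, hvv k, h5] at h1
      linear_combination h1
    have hκne : (1:ℝ) - κ ≠ 0 := by linarith
    have hμ : ∀ k, w k = w i := by
      intro k
      have h1 : w k * (1-κ) = w i * (1-κ) := by rw [hwk k, hwk i]
      exact mul_right_cancel₀ hκne h1
    have hsumv : ∑ j, v j = 0 := by
      have h1 : ∑ j, w j • v j = w i • ∑ j, v j := by
        rw [Finset.smul_sum]
        exact Finset.sum_congr rfl fun j _ => by rw [hμ j]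
      rw [hw0] at h1
      have h2 := h1.symm
      rcases smul_eq_zero.1 h2 with h | h
      · exact absurd h hwi
      · exact h
    have hsw : ∑ j, w j = ((n:ℝ)+1) * w i := by
      rw [Finset.sum_congr rfl fun j _ => hμ j, Finset.sum_const, Finset.card_univ,
        Fintype.card_fin, nsmul_eq_mul]
      push_cast; ring
    have hκval : κ = -1/n := by
      have h1 := hwk i
      rw [hsw] at h1
      have h2 : (1 - κ) = -κ * ((n:ℝ)+1) := by
        have h3 : w i * (1 - κ) = w i * (-κ * ((n:ℝ)+1)) := by
          rw [h1]; ring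
        exact mul_left_cancel₀ hwi h3
      field_simp
      linarith
    have hcent : simplexCentroid v = 0 := by
      show Finset.univ.centroid ℝ v = 0
      rw [Finset.centroid_def,
        Finset.affineCombination_eq_linear_combination _ _ _
          (Finset.univ.sum_centroidWeights_eq_one_of_nonempty ℝ Finset.univ_nonempty)]
      simp only [Finset.centroidWeights, Function.const_apply]
      rw [← Finset.smul_sum, hsumv, smul_zero]
    have hvectop : vectorSpan ℝ (Set.range v) = ⊤ :=
      AffineSubspace.vectorSpan_eq_top_of_affineSpan_eq_top ℝ
        (EuclideanSpace ℝ (Fin n)) (EuclideanSpace ℝ (Fin n)) htot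
    have hspan : Submodule.span ℝ (Set.range v) = ⊤ := by
      rw [eq_top_iff, ← hvectop, vectorSpan_def]
      refine Submodule.span_le.2 ?_
      intro z hz
      rw [Set.mem_vsub] at hz
      obtain ⟨a, ha, b', hb', rfl⟩ := hz
      rw [vsub_eq_sub]
      exact Submodule.sub_mem _ (Submodule.subset_span ha) (Submodule.subset_span hb')
    have hM : ∀ x : EuclideanSpace ℝ (Fin n),
        ∑ j, ⟪v j, x⟫ • v j = (((n:ℝ)+1)/n) • x := by
      intro x
      have hx : x ∈ Submodule.span ℝ (Set.range v) := by rw [hspan]; trivial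
      refine Submodule.span_induction ?_ ?_ ?_ ?_ hx
      · rintro _ ⟨k, rfl⟩
        rw [← Finset.add_sum_erase _ _ (Finset.mem_univ k)]
        have h1 : ∀ j ∈ Finset.univ.erase k, ⟪v j, v k⟫ • v j = κ • v j := by
          intro j hj
          rw [h2κ j k (Finset.ne_of_mem_erase hj), hκdef]
        rw [Finset.sum_congr rfl h1, ← Finset.smul_sum]
        have h2 : ∑ j ∈ Finset.univ.erase k, v j = -(v k) := by
          have h3 := Finset.add_sum_erase Finset.univ v (Finset.mem_univ k)
          rw [hsumv] at h3
          exact eq_neg_of_add_eq_zero_right h3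
        have h4 : ((n:ℝ)+1)/n = 1 - κ := by rw [hκval]; field_simp; ring
        rw [h2, hvv k, one_smul, smul_neg, h4, sub_smul, one_smul]
        abel
      · simp
      · intro y z _ _ hy hz
        simp only [inner_add_right, add_smul, Finset.sum_add_distrib, hy, hz, smul_add]
      · intro a y _ hy
        simp only [real_inner_smul_right, mul_smul, ← Finset.smul_sum, hy]
        rw [smul_comm]
    have hnA : (n:ℝ) ∈ A := by
      refine ⟨hnR, 0, ?_⟩
      intro x hx
      have hxn : ‖x‖ ≤ 1 := by simpa [unitBall, mem_closedBall_zero_iff] using hx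
      set w' : Fin (n+1) → ℝ := fun j => (1 + ⟪v j, x⟫)/((n:ℝ)+1) with hw'def
      have hin1 : ∀ j, |⟪v j, x⟫| ≤ 1 := by
        intro j
        calc |⟪v j, x⟫| ≤ ‖v j‖ * ‖x‖ := abs_real_inner_le_norm _ _
        _ ≤ 1 := by rw [hnorm j, one_mul]; exact hxn
      have hw'0 : ∀ j ∈ Finset.univ, 0 ≤ w' j := by
        intro j _
        have h2 := abs_le.1 (hin1 j)
        have h3 : (0:ℝ) < (n:ℝ)+1 := by linarith
        rw [hw'def]
        exact div_nonneg (by linarith [h2.1]) (by linarith)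
      have hw'1 : ∑ j, w' j = 1 := by
        have h1 : ∑ j, ⟪v j, x⟫ = 0 := by
          rw [← sum_inner, hsumv, inner_zero_left]
        have h2 : ∑ j, w' j = (∑ j : Fin (n+1), (1 + ⟪v j, x⟫)) / ((n:ℝ)+1) := by
          rw [hw'def, Finset.sum_div]
        rw [h2, Finset.sum_add_distrib, h1, Finset.sum_const, Finset.card_univ,
          Fintype.card_fin, add_zero, nsmul_eq_mul, mul_one]
        push_cast
        field_simp
      have hcm2 : Finset.univ.centerMass w' v = (n:ℝ)⁻¹ • x := by
        rw [Finset.centerMass_eq_of_sum_1 _ _ hw'1]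
        have h1 : ∀ j : Fin (n+1), w' j • v j
            = ((n:ℝ)+1)⁻¹ • (v j + ⟪v j, x⟫ • v j) := by
          intro j
          rw [hw'def, smul_add]
          match_scalars <;> field_simp
        rw [Finset.sum_congr rfl fun j _ => h1 j, ← Finset.smul_sum,
          Finset.sum_add_distrib, hsumv, zero_add, hM x, smul_smul]
        congr 1
        field_simp
      have hsmem : (n:ℝ)⁻¹ • x ∈ simplexSet v := by
        rw [← hcm2]
        exact Finset.centerMass_mem_convexHull _ hw'0 (by rw [hw'1]; norm_num)
          (fun i _ => Set.mem_range_self i)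
      refine ⟨(n:ℝ) • ((n:ℝ)⁻¹ • x), ⟨(n:ℝ)⁻¹ • x, hsmem, ?_⟩, ?_⟩
      · show simplexCentroid v + (n:ℝ) • ((n:ℝ)⁻¹ • x - simplexCentroid v)
            = (n:ℝ) • ((n:ℝ)⁻¹ • x)
        rw [hcent, sub_zero, zero_add]
      · show (0 : EuclideanSpace ℝ (Fin n)) + (n:ℝ) • ((n:ℝ)⁻¹ • x) = x
        rw [zero_add, smul_smul, mul_inv_cancel₀ hnR.ne', one_smul]
    have hle : sInf A ≤ (n:ℝ) := csInf_le ⟨0, fun σ hσ => le_of_lt hσ.1⟩ hnA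
    rw [halpha]
    exact le_antisymm hle hge
end

section
/- Let S be a nondegenerate n-dimensional simplex in ℝ^n with basic Lagrange polynomial coefficients (l_{ij}), let x⁰ ∈ ℝ^n and ρ > 0, and suppose the closed ball B(x⁰;ρ) is not contained in S. Then ξ(B(x⁰;ρ);S) = (n+1)·max_{1≤j≤n+1} [ ρ·(Σ_{i=1}^{n} l_{ij}²)^{1/2} − Σ_{i=1}^{n} l_{ij}·x_i⁰ − l_{n+1,j} ] + 1. In particular, if B_n ⊄ S, then ξ(B_n;S) = (n+1)·max_{1≤j≤n+1} [ (Σ_{i=1}^{n} l_{ij}²)^{1/2} − l_{n+1,j} ] + 1. -/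
open Set MeasureTheory Finset Metric

private lemma affine_eval_line' {n : ℕ} (f : EuclideanSpace ℝ (Fin n) →ᵃ[ℝ] ℝ)
    (c x : EuclideanSpace ℝ (Fin n)) (t : ℝ) :
    f (c + t • (x - c)) = f c + t * (f x - f c) := by
  have h : c + t • (x - c) = AffineMap.lineMap c x t := by
    rw [AffineMap.lineMap_apply]
    simp [vsub_eq_sub, vadd_eq_add, add_comm]
  rw [h, AffineMap.apply_lineMap, AffineMap.lineMap_apply]
  simp only [vsub_eq_sub, vadd_eq_add, smul_eq_mul]
  ring

private lemma lam_centroid' {n : ℕ} (v : Fin (n + 1) → EuclideanSpace ℝ (Fin n))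
    (lam : Fin (n + 1) → (EuclideanSpace ℝ (Fin n) →ᵃ[ℝ] ℝ))
    (hlam : IsLagrangeBasis v lam) (j : Fin (n + 1)) :
    lam j (simplexCentroid v) = ((n : ℝ) + 1)⁻¹ := by
  classical
  have hlam' : ∀ j k, lam j (v k) = if j = k then (1:ℝ) else 0 := hlam
  have hcard : ((#(Finset.univ : Finset (Fin (n + 1)))) : ℝ) ≠ 0 := by
    simp
    positivity
  have hsum := Finset.univ.sum_centroidWeights_eq_one_of_cast_card_ne_zero (k := ℝ) hcard
  rw [simplexCentroid, Finset.centroid_def,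
    Finset.univ.map_affineCombination v _ hsum (lam j),
    Finset.univ.affineCombination_eq_linear_combination _ _ hsum]
  simp only [Function.comp, hlam', Finset.centroidWeights_apply, smul_eq_mul, mul_ite,
    mul_one, mul_zero]
  rw [Finset.sum_ite_eq]
  simp

private lemma mem_simplexSet_iff' {n : ℕ} (v : Fin (n + 1) → EuclideanSpace ℝ (Fin n))
    (hv : AffineIndependent ℝ v)
    (lam : Fin (n + 1) → (EuclideanSpace ℝ (Fin n) →ᵃ[ℝ] ℝ))
    (hlam : IsLagrangeBasis v lam) (x : EuclideanSpace ℝ (Fin n)) :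
    x ∈ simplexSet v ↔ ∀ j, 0 ≤ lam j x := by
  classical
  have hlam' : ∀ j k, lam j (v k) = if j = k then (1:ℝ) else 0 := hlam
  have htop : affineSpan ℝ (Set.range v) = ⊤ :=
    hv.affineSpan_eq_top_iff_card_eq_finrank_add_one.mpr (by simp)
  let b : AffineBasis (Fin (n + 1)) ℝ (EuclideanSpace ℝ (Fin n)) := ⟨v, hv, htop⟩
  have hb : ∀ k, b k = v k := fun _ => rfl
  have hcoord : ∀ j y, lam j y = b.coord j y := by
    intro j y
    have hsum : ∑ k, b.coord k y = 1 := b.sum_coord_apply_eq_one y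
    have hrep : Finset.univ.affineCombination ℝ v (fun k => b.coord k y) = y := by
      have := b.affineCombination_coord_eq_self y
      simpa [hb] using this
    calc lam j y = lam j (Finset.univ.affineCombination ℝ v (fun k => b.coord k y)) := by
          rw [hrep]
      _ = Finset.univ.affineCombination ℝ ((lam j) ∘ v) (fun k => b.coord k y) :=
          Finset.univ.map_affineCombination v _ hsum (lam j)
      _ = ∑ k, b.coord k y • ((lam j) ∘ v) k :=
          Finset.univ.affineCombination_eq_linear_combination _ _ hsum
      _ = b.coord j y := by
          simp only [Function.comp, hlam', smul_eq_mul, mul_ite, mul_one, mul_zero]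
          rw [Finset.sum_ite_eq]
          simp
  have hrange : Set.range ⇑b = Set.range v := rfl
  rw [simplexSet, ← hrange, AffineBasis.convexHull_eq_nonneg_coord]
  simp only [Set.mem_setOf_eq]
  constructor
  · intro h j; rw [hcoord]; exact h j
  · intro h j; rw [← hcoord]; exact h j

private lemma mem_homothet_iff' {n : ℕ} (v : Fin (n + 1) → EuclideanSpace ℝ (Fin n))
    (hv : AffineIndependent ℝ v)
    (lam : Fin (n + 1) → (EuclideanSpace ℝ (Fin n) →ᵃ[ℝ] ℝ))
    (hlam : IsLagrangeBasis v lam) {σ : ℝ} (hσ : 0 < σ) (x : EuclideanSpace ℝ (Fin n)) :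
    x ∈ simplexHomothet v σ ↔ ∀ j, (1 - σ) / ((n : ℝ) + 1) ≤ lam j x := by
  have hn1 : (0:ℝ) < (n:ℝ) + 1 := by positivity
  set c := simplexCentroid v with hc
  constructor
  · rintro ⟨y, hy, rfl⟩
    intro j
    rw [affine_eval_line', lam_centroid' v lam hlam j, div_eq_mul_inv]
    have h0 : 0 ≤ lam j y := (mem_simplexSet_iff' v hv lam hlam y).1 hy j
    nlinarith [mul_nonneg hσ.le h0]
  · intro h
    refine ⟨c + σ⁻¹ • (x - c), ?_, ?_⟩
    · rw [mem_simplexSet_iff' v hv lam hlam]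
      intro j
      rw [affine_eval_line', lam_centroid' v lam hlam j]
      have hx := h j
      rw [div_eq_mul_inv] at hx
      have h2 : 0 ≤ σ * ((n:ℝ)+1)⁻¹ + (lam j x - ((n:ℝ)+1)⁻¹) := by nlinarith
      have h3 : ((n:ℝ)+1)⁻¹ + σ⁻¹ * (lam j x - ((n:ℝ)+1)⁻¹)
          = σ⁻¹ * (σ * ((n:ℝ)+1)⁻¹ + (lam j x - ((n:ℝ)+1)⁻¹)) := by
        field_simp
      rw [h3]
      exact mul_nonneg (inv_nonneg.mpr hσ.le) h2
    · show c + σ • (c + σ⁻¹ • (x - c) - c) = x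
      rw [add_sub_cancel_left, smul_smul, mul_inv_cancel₀ hσ.ne', one_smul]
      abel

open scoped RealInnerProductSpace in
private lemma ball_min_iff' {n : ℕ} (g : EuclideanSpace ℝ (Fin n)) (hg : g ≠ 0)
    (c0 m : ℝ) (x0 : EuclideanSpace ℝ (Fin n)) {ρ : ℝ} (hρ : 0 < ρ) :
    (∀ x ∈ Metric.closedBall x0 ρ, m ≤ ⟪g, x⟫ + c0) ↔
      m ≤ (⟪g, x0⟫ + c0) - ρ * ‖g‖ := by
  have hgn : (0:ℝ) < ‖g‖ := norm_pos_iff.mpr hg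
  constructor
  · intro h
    have hx : x0 - (ρ / ‖g‖) • g ∈ Metric.closedBall x0 ρ := by
      rw [Metric.mem_closedBall, dist_eq_norm]
      have : x0 - (ρ / ‖g‖) • g - x0 = -((ρ / ‖g‖) • g) := by abel
      rw [this, norm_neg, norm_smul, Real.norm_eq_abs,
        abs_of_nonneg (by positivity : (0:ℝ) ≤ ρ / ‖g‖)]
      rw [div_mul_cancel₀ _ hgn.ne']
    have := h _ hx
    rw [inner_sub_right, inner_smul_right, real_inner_self_eq_norm_mul_norm] at this
    have hrw : ρ / ‖g‖ * (‖g‖ * ‖g‖) = ρ * ‖g‖ := by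
      field_simp
    linarith [hrw ▸ this]
  · intro h x hx
    rw [Metric.mem_closedBall, dist_eq_norm] at hx
    have h1 : ⟪g, x0 - x⟫ ≤ ‖g‖ * ‖x0 - x‖ := real_inner_le_norm _ _
    have h2 : ‖x0 - x‖ ≤ ρ := by
      rw [show x0 - x = -(x - x0) by abel, norm_neg]; exact hx
    rw [inner_sub_right] at h1
    nlinarith [mul_le_mul_of_nonneg_left h2 hgn.le]


/-- Theorem 10.3: For a nondegenerate simplex `S` with Lagrange
coefficients `l`, `b` and a ball `B(x⁰;ρ) ⊄ S`:
`ξ(B(x⁰;ρ);S) = (n+1)·max_j [ρ√(Σ_i l_{ij}²) − Σ_i l_{ij}x⁰_i − b_j] + 1`;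
in particular if `B_n ⊄ S` then
`ξ(B_n;S) = (n+1)·max_j [√(Σ_i l_{ij}²) − b_j] + 1`. -/
theorem xi_ball_formula (n : ℕ) (hn : 0 < n)
    (v : Fin (n + 1) → EuclideanSpace ℝ (Fin n)) (hv : AffineIndependent ℝ v)
    (l : Fin n → Fin (n + 1) → ℝ) (b : Fin (n + 1) → ℝ)
    (lam : Fin (n + 1) → (EuclideanSpace ℝ (Fin n) →ᵃ[ℝ] ℝ))
    (hlam : IsLagrangeBasis v lam)
    (hcoef : ∀ j x, lam j x = (∑ i : Fin n, l i j * x i) + b j) :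
    (∀ (x0 : EuclideanSpace ℝ (Fin n)) (ρ : ℝ), 0 < ρ →
      ¬ Metric.closedBall x0 ρ ⊆ simplexSet v →
      xiInd (Metric.closedBall x0 ρ) v =
        ((n : ℝ) + 1) * (⨆ j : Fin (n + 1),
          (ρ * Real.sqrt (∑ i : Fin n, (l i j) ^ 2) - (∑ i : Fin n, l i j * x0 i) - b j))
          + 1) ∧
    (¬ unitBall n ⊆ simplexSet v →
      xiInd (unitBall n) v =
        ((n : ℝ) + 1) * (⨆ j : Fin (n + 1),
          (Real.sqrt (∑ i : Fin n, (l i j) ^ 2) - b j)) + 1) := by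
  classical
  have hn1 : (0:ℝ) < (n:ℝ) + 1 := by positivity
  -- gradient vectors
  set g : Fin (n + 1) → EuclideanSpace ℝ (Fin n) :=
    fun j => (WithLp.equiv 2 (Fin n → ℝ)).symm (fun i => l i j) with hg
  have hgi : ∀ j i, g j i = l i j := fun j i => rfl
  have hnorm : ∀ j, ‖g j‖ = Real.sqrt (∑ i : Fin n, (l i j) ^ 2) := by
    intro j
    rw [EuclideanSpace.norm_eq]
    congr 1
    refine Finset.sum_congr rfl fun i _ => ?_
    rw [hgi, Real.norm_eq_abs, sq_abs]
  have hinner : ∀ j x, (inner ℝ (g j) x : ℝ) + b j = lam j x := by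
    intro j x
    rw [hcoef j x]
    have hin : (inner ℝ (g j) x : ℝ) = ∑ i : Fin n, l i j * x i := by
      rw [PiLp.inner_apply]
      exact Finset.sum_congr rfl fun i _ => by rw [RCLike.inner_apply, conj_trivial, hgi, mul_comm]
    rw [hin]
  have hgne : ∀ j, g j ≠ 0 := by
    intro j h0
    have hl0 : ∀ i, l i j = 0 := by
      intro i
      have : g j i = 0 := by simpa using congrArg (fun y : EuclideanSpace ℝ (Fin n) => y i) h0
      rwa [hgi] at this
    obtain ⟨k, hk⟩ : ∃ k : Fin (n + 1), k ≠ j := by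
      rcases eq_or_ne j ⟨0, by omega⟩ with h | h
      · exact ⟨⟨1, by omega⟩, by rw [h]; simp [Fin.ext_iff]⟩
      · exact ⟨⟨0, by omega⟩, fun hh => h hh.symm⟩
    have h1 : lam j (v j) = b j := by rw [hcoef]; simp [hl0]
    have h2 : lam j (v k) = b j := by rw [hcoef]; simp [hl0]
    have h3 : lam j (v j) = 1 := by rw [hlam j j]; simp
    have h4 : lam j (v k) = 0 := by rw [hlam j k]; simp [hk.symm]
    rw [h3] at h1; rw [h4] at h2
    exact one_ne_zero (by linarith : (1:ℝ) = 0)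
  have main : ∀ (x0 : EuclideanSpace ℝ (Fin n)) (ρ : ℝ), 0 < ρ →
      ¬ Metric.closedBall x0 ρ ⊆ simplexSet v →
      xiInd (Metric.closedBall x0 ρ) v =
        ((n : ℝ) + 1) * (⨆ j : Fin (n + 1),
          (ρ * Real.sqrt (∑ i : Fin n, (l i j) ^ 2) - (∑ i : Fin n, l i j * x0 i) - b j))
          + 1 := by
    intro x0 ρ hρ hnot
    set F : Fin (n + 1) → ℝ := fun j => ρ * ‖g j‖ - lam j x0 with hF
    have hFval : ∀ j, ρ * Real.sqrt (∑ i : Fin n, (l i j) ^ 2)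
        - (∑ i : Fin n, l i j * x0 i) - b j = F j := by
      intro j
      rw [hF]
      simp only
      rw [hnorm j, hcoef j x0]
      ring
    have hbdd : BddAbove (Set.range F) := (Set.finite_range F).bddAbove
    set M : ℝ := ⨆ j, F j with hM
    have hsub : ∀ σ : ℝ, 0 < σ →
        (Metric.closedBall x0 ρ ⊆ simplexHomothet v σ ↔
          ∀ j, F j ≤ (σ - 1) / ((n:ℝ) + 1)) := by
      intro σ hσ
      constructor
      · intro hs j
        have h1 : ∀ x ∈ Metric.closedBall x0 ρ,
            (1 - σ) / ((n:ℝ) + 1) ≤ (inner ℝ (g j) x : ℝ) + b j := by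
          intro x hx
          rw [hinner j x]
          exact (mem_homothet_iff' v hv lam hlam hσ x).1 (hs hx) j
        have h2 := (ball_min_iff' (g j) (hgne j) (b j) _ x0 hρ).1 h1
        rw [hinner j x0] at h2
        have h3 : (1 - σ) / ((n:ℝ) + 1) = -((σ - 1) / ((n:ℝ) + 1)) := by ring
        rw [h3] at h2
        simp only [hF]
        linarith
      · intro hFle x hx
        rw [mem_homothet_iff' v hv lam hlam hσ]
        intro j
        have h2 : (1 - σ) / ((n:ℝ) + 1) ≤ ((inner ℝ (g j) x0 : ℝ) + b j) - ρ * ‖g j‖ := by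
          rw [hinner j x0]
          have := hFle j
          simp only [hF] at this
          have h3 : (1 - σ) / ((n:ℝ) + 1) = -((σ - 1) / ((n:ℝ) + 1)) := by ring
          rw [h3]
          linarith
        have := (ball_min_iff' (g j) (hgne j) (b j) _ x0 hρ).2 h2 x hx
        rwa [hinner j x] at this
    have hMpos : 0 < M := by
      obtain ⟨x, hx, hxS⟩ := Set.not_subset.mp hnot
      have hex : ∃ j, lam j x < 0 := by
        by_contra hh
        push_neg at hh
        exact hxS ((mem_simplexSet_iff' v hv lam hlam x).2 fun j => hh j)
      obtain ⟨j, hj⟩ := hex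
      have hlow : ((inner ℝ (g j) x0 : ℝ) + b j) - ρ * ‖g j‖ ≤ (inner ℝ (g j) x : ℝ) + b j :=
        (ball_min_iff' (g j) (hgne j) (b j) _ x0 hρ).2 le_rfl x hx
      rw [hinner j x0, hinner j x] at hlow
      have hFj : 0 < F j := by simp only [hF]; linarith
      exact lt_of_lt_of_le hFj (le_ciSup hbdd j)
    have hset : {σ : ℝ | 1 ≤ σ ∧ Metric.closedBall x0 ρ ⊆ simplexHomothet v σ}
        = Set.Ici (((n:ℝ) + 1) * M + 1) := by
      ext σ
      simp only [Set.mem_setOf_eq, Set.mem_Ici]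
      constructor
      · rintro ⟨h1, h2⟩
        have h3 := (hsub σ (by linarith)).1 h2
        have h4 : M ≤ (σ - 1) / ((n:ℝ) + 1) := ciSup_le h3
        rw [le_div_iff₀ hn1] at h4
        linarith
      · intro h1
        have hσ1 : (1:ℝ) < σ := by nlinarith
        refine ⟨hσ1.le, (hsub σ (by linarith)).2 fun j => ?_⟩
        have h5 : F j ≤ M := le_ciSup hbdd j
        have h6 : M ≤ (σ - 1) / ((n:ℝ) + 1) := by
          rw [le_div_iff₀ hn1]; nlinarith
        exact h5.trans h6
    have hsup : (⨆ j : Fin (n + 1),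
        (ρ * Real.sqrt (∑ i : Fin n, (l i j) ^ 2) - (∑ i : Fin n, l i j * x0 i) - b j)) = M := by
      rw [hM]
      congr 1
      funext j
      exact hFval j
    rw [xiInd, hset, csInf_Ici, hsup]
  refine ⟨main, fun hnot => ?_⟩
  have h := main 0 1 one_pos hnot
  have h0 : ∀ j : Fin (n + 1), (∑ i : Fin n, l i j * (0 : EuclideanSpace ℝ (Fin n)) i) = 0 := by
    intro j
    refine Finset.sum_eq_zero fun i _ => ?_
    show l i j * (0:ℝ) = 0
    ring
  have hsup2 : (⨆ j : Fin (n + 1), (1 * Real.sqrt (∑ i : Fin n, (l i j) ^ 2)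
      - (∑ i : Fin n, l i j * (0 : EuclideanSpace ℝ (Fin n)) i) - b j))
      = ⨆ j : Fin (n + 1), (Real.sqrt (∑ i : Fin n, (l i j) ^ 2) - b j) := by
    apply congrArg
    funext j
    rw [h0 j, one_mul, sub_zero]
  rw [show unitBall n = Metric.closedBall (0 : EuclideanSpace ℝ (Fin n)) 1 from rfl, h, hsup2]
end
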